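/- arXiv:2602.05593 — 3 statements merged into one kernel-verified Lean document; each statement's English description precedes it below -/
import Mathlib

section
/- Let μ be a self-similar measure on [0,1] for contracting similarities {T_a}_{a ∈ A} with probability vector (p_a), all p_a > 0. Let f : [0,1] → ℝ be a C² map with f'(x) ≠ 0 for all x ∈ [0,1], let g be a two-sided inverse of f from f([0,1]) to [0,1], and for each a ∈ A set S_a = f ∘ T_a ∘ g. Let Z = {x ∈ [0,1] : f''(x) = 0} and suppose μ(Z) > 0 and that the pushforward f_* μ satisfies f_* μ = Σ_a p_a (S_a)_* (f_* μ). Then there exists a finite word (a_1, …, a_k) ∈ A^k for some k ≥ 1 such that f_* μ ({y : (S_{a_1} ∘ ⋯ ∘ S_{a_k})''(y) = 0}) > 0. -/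
open MeasureTheory Filter Set
open scoped ENNReal NNReal
open scoped Topology

/-- Composition `S_{a_1} ∘ ⋯ ∘ S_{a_k}` of the maps of an IFS along a finite word. -/
def wordComp {m : ℕ} (S : Fin m → ℝ → ℝ) : List (Fin m) → ℝ → ℝ
  | [] => id
  | a :: l => S a ∘ wordComp S l

theorem wordComp_cons_apply {m : ℕ} (S : Fin m → ℝ → ℝ) (a : Fin m) (l : List (Fin m)) (x : ℝ) :
    wordComp S (a :: l) x = S a (wordComp S l x) := rfl

theorem wordComp_nil_apply {m : ℕ} (S : Fin m → ℝ → ℝ) (x : ℝ) :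
    wordComp S [] x = x := rfl

theorem measurable_wordComp {m : ℕ} {T : Fin m → ℝ → ℝ} (hT : ∀ a, Measurable (T a)) :
    ∀ l : List (Fin m), Measurable (wordComp T l) := by
  intro l
  induction l with
  | nil => exact measurable_id
  | cons a l ih => exact (hT a).comp ih

noncomputable def chainU {m : ℕ} (P : Fin m → ℝ≥0∞) (T : Fin m → ℝ → ℝ) (Z : Set ℝ) :
    ℕ → ℝ → ℝ≥0∞
  | 0 => Z.indicator 1
  | n+1 => fun x => Z.indicator 1 x + ∑ a, P a * chainU P T Z n (T a x)

noncomputable def chainV {m : ℕ} (P : Fin m → ℝ≥0∞) (T : Fin m → ℝ → ℝ) (Z : Set ℝ) :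
    ℕ → ℝ → ℝ≥0∞
  | 0 => 0
  | n+1 => fun x =>
      (∑ a, P a * chainV P T Z n (T a x)) + Z.indicator 1 x * ∑ a, P a * chainU P T Z n (T a x)

theorem chainU_zero_apply {m : ℕ} (P : Fin m → ℝ≥0∞) (T : Fin m → ℝ → ℝ) (Z : Set ℝ) (x : ℝ) :
    chainU P T Z 0 x = Z.indicator 1 x := rfl

theorem chainU_succ_apply {m : ℕ} (P : Fin m → ℝ≥0∞) (T : Fin m → ℝ → ℝ) (Z : Set ℝ) (n : ℕ)
    (x : ℝ) : chainU P T Z (n+1) x = Z.indicator 1 x + ∑ a, P a * chainU P T Z n (T a x) := rfl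

theorem chainV_succ_apply {m : ℕ} (P : Fin m → ℝ≥0∞) (T : Fin m → ℝ → ℝ) (Z : Set ℝ) (n : ℕ)
    (x : ℝ) : chainV P T Z (n+1) x =
      (∑ a, P a * chainV P T Z n (T a x)) + Z.indicator 1 x * ∑ a, P a * chainU P T Z n (T a x) :=
  rfl

section aux

variable {m : ℕ} {P : Fin m → ℝ≥0∞} {T : Fin m → ℝ → ℝ} {Z : Set ℝ}

theorem measurable_chainU (hT : ∀ a, Measurable (T a)) (hZm : MeasurableSet Z) :
    ∀ n, Measurable (chainU P T Z n) := by
  intro n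
  induction n with
  | zero => exact measurable_one.indicator hZm
  | succ n ih =>
    exact (measurable_one.indicator hZm).add
      (Finset.measurable_sum _ fun a _ => (measurable_const.mul (ih.comp (hT a))))

theorem measurable_chainV (hT : ∀ a, Measurable (T a)) (hZm : MeasurableSet Z) :
    ∀ n, Measurable (chainV P T Z n) := by
  intro n
  induction n with
  | zero => exact measurable_const
  | succ n ih =>
    exact (Finset.measurable_sum _ fun a _ => (measurable_const.mul (ih.comp (hT a)))).add
      ((measurable_one.indicator hZm).mul
        (Finset.measurable_sum _ fun a _ =>
          (measurable_const.mul ((measurable_chainU hT hZm n).comp (hT a)))))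

theorem chainU_le (hP1 : ∑ a, P a = 1) :
    ∀ n x, chainU P T Z n x ≤ 1 + chainV P T Z n x := by
  intro n
  induction n with
  | zero =>
    intro x
    by_cases hx : x ∈ Z <;>
      simp [chainU, chainV, Set.indicator_of_mem, Set.indicator_of_notMem, hx]
  | succ n ih =>
    intro x
    by_cases hx : x ∈ Z
    · simp only [chainU, chainV, Set.indicator_of_mem hx, Pi.one_apply, one_mul]
      calc 1 + ∑ a, P a * chainU P T Z n (T a x)
          ≤ 1 + ((∑ a, P a * chainV P T Z n (T a x)) + ∑ a, P a * chainU P T Z n (T a x)) := by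
            gcongr; exact le_add_self
        _ = _ := rfl
    · simp only [chainU, chainV, Set.indicator_of_notMem hx, zero_add, zero_mul, add_zero]
      calc ∑ a, P a * chainU P T Z n (T a x)
          ≤ ∑ a, P a * (1 + chainV P T Z n (T a x)) := by
            gcongr with a; exact ih (T a x)
        _ = (∑ a, P a) + ∑ a, P a * chainV P T Z n (T a x) := by
            simp [mul_add, Finset.sum_add_distrib]
        _ = 1 + ∑ a, P a * chainV P T Z n (T a x) := by rw [hP1]

variable {μ : MeasureTheory.Measure ℝ}

theorem lintegral_chainU (hT : ∀ a, Measurable (T a)) (hZm : MeasurableSet Z)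
    (hinv : ∀ h : ℝ → ℝ≥0∞, Measurable h →
      ∫⁻ x, ∑ a, P a * h (T a x) ∂μ = ∫⁻ x, h x ∂μ) :
    ∀ n, ∫⁻ x, chainU P T Z n x ∂μ = (n + 1) * μ Z := by
  intro n
  induction n with
  | zero => simpa [chainU] using lintegral_indicator_one (μ := μ) hZm
  | succ n ih =>
    have hmeas := measurable_chainU (P := P) hT hZm n
    calc ∫⁻ x, chainU P T Z (n+1) x ∂μ
        = ∫⁻ x, Z.indicator 1 x + ∑ a, P a * chainU P T Z n (T a x) ∂μ := rfl
      _ = (∫⁻ x, Z.indicator 1 x ∂μ) + ∫⁻ x, ∑ a, P a * chainU P T Z n (T a x) ∂μ :=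
          lintegral_add_left (measurable_one.indicator hZm) _
      _ = μ Z + ∫⁻ x, chainU P T Z n x ∂μ := by
          rw [lintegral_indicator_one hZm, hinv _ hmeas]
      _ = (↑(n+1) + 1) * μ Z := by rw [ih]; push_cast; ring

theorem lintegral_chainV (hT : ∀ a, Measurable (T a)) (hZm : MeasurableSet Z)
    (hinv : ∀ h : ℝ → ℝ≥0∞, Measurable h →
      ∫⁻ x, ∑ a, P a * h (T a x) ∂μ = ∫⁻ x, h x ∂μ)
    (hzero : ∀ l : List (Fin m), l ≠ [] → μ (Z ∩ wordComp T l ⁻¹' Z) = 0) :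
    ∀ n, ∫⁻ x, chainV P T Z n x ∂μ = 0 := by
  have hbase : ∀ l : List (Fin m), l ≠ [] →
      ∫⁻ x, Z.indicator 1 x * Z.indicator 1 (wordComp T l x) ∂μ = 0 := by
    intro l hl
    have hpt : ∀ x, Z.indicator (1 : ℝ → ℝ≥0∞) x * Z.indicator 1 (wordComp T l x)
        = (Z ∩ wordComp T l ⁻¹' Z).indicator 1 x := by
      intro x
      by_cases h1 : x ∈ Z <;> by_cases h2 : wordComp T l x ∈ Z <;>
        simp [Set.indicator_apply, h1, h2, Set.mem_inter_iff]
    rw [lintegral_congr hpt,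
      lintegral_indicator_one (hZm.inter ((measurable_wordComp hT l) hZm)),
      hzero l hl]
  have G : ∀ n (l : List (Fin m)), l ≠ [] →
      ∫⁻ x, Z.indicator 1 x * chainU P T Z n (wordComp T l x) ∂μ = 0 := by
    intro n
    induction n with
    | zero => exact hbase
    | succ n ih =>
      intro l hl
      have hUm := measurable_chainU (P := P) hT hZm n
      have hpt : ∀ x, Z.indicator (1 : ℝ → ℝ≥0∞) x * chainU P T Z (n+1) (wordComp T l x)
          = Z.indicator 1 x * Z.indicator 1 (wordComp T l x)
            + ∑ a, P a * (Z.indicator 1 x * chainU P T Z n (wordComp T (a :: l) x)) := by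
        intro x
        rw [chainU_succ_apply, mul_add, Finset.mul_sum]
        congr 1
        refine Finset.sum_congr rfl fun a _ => ?_
        rw [wordComp_cons_apply]
        ring
      have hma : ∀ a : Fin m,
          Measurable fun x => Z.indicator (1 : ℝ → ℝ≥0∞) x
            * chainU P T Z n (wordComp T (a :: l) x) :=
        fun a => (measurable_one.indicator hZm).mul (hUm.comp (measurable_wordComp hT (a :: l)))
      calc ∫⁻ x, Z.indicator 1 x * chainU P T Z (n+1) (wordComp T l x) ∂μ
          = (∫⁻ x, Z.indicator 1 x * Z.indicator 1 (wordComp T l x) ∂μ)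
            + ∫⁻ x, ∑ a, P a * (Z.indicator 1 x * chainU P T Z n (wordComp T (a :: l) x)) ∂μ := by
            have hf1 : Measurable fun x =>
                Z.indicator (1 : ℝ → ℝ≥0∞) x * Z.indicator 1 (wordComp T l x) :=
              (measurable_one.indicator hZm).mul
                ((measurable_one.indicator hZm).comp (measurable_wordComp hT l))
            rw [← lintegral_add_left hf1]
            exact lintegral_congr hpt
        _ = 0 + ∑ a, P a * ∫⁻ x, Z.indicator 1 x * chainU P T Z n (wordComp T (a :: l) x) ∂μ := by
            rw [hbase l hl]
            congr 1
            rw [lintegral_finset_sum _ (fun a _ => (hma a).const_mul _)]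
            exact Finset.sum_congr rfl fun a _ => lintegral_const_mul _ (hma a)
        _ = 0 := by
            rw [zero_add]
            refine Finset.sum_eq_zero fun a _ => ?_
            rw [ih (a :: l) (List.cons_ne_nil a l), mul_zero]
  intro n
  induction n with
  | zero => simp [chainV]
  | succ n ih =>
    have hVm := measurable_chainV (P := P) hT hZm n
    have hUm := measurable_chainU (P := P) hT hZm n
    have hma : ∀ a : Fin m,
        Measurable fun x => Z.indicator (1 : ℝ → ℝ≥0∞) x * chainU P T Z n (T a x) :=
      fun a => (measurable_one.indicator hZm).mul (hUm.comp (hT a))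
    calc ∫⁻ x, chainV P T Z (n+1) x ∂μ
        = (∫⁻ x, ∑ a, P a * chainV P T Z n (T a x) ∂μ)
          + ∫⁻ x, Z.indicator 1 x * ∑ a, P a * chainU P T Z n (T a x) ∂μ := by
          have hfV : Measurable fun x => ∑ a, P a * chainV P T Z n (T a x) :=
            Finset.measurable_sum _ fun a _ => measurable_const.mul (hVm.comp (hT a))
          rw [← lintegral_add_left hfV]
          exact lintegral_congr fun x => chainV_succ_apply P T Z n x
      _ = 0 + ∫⁻ x, ∑ a, P a * (Z.indicator 1 x * chainU P T Z n (T a x)) ∂μ := by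
          rw [hinv _ hVm, ih]
          congr 1
          refine lintegral_congr fun x => ?_
          rw [Finset.mul_sum]
          exact Finset.sum_congr rfl fun a _ => by ring
      _ = ∑ a, P a * ∫⁻ x, Z.indicator 1 x * chainU P T Z n (T a x) ∂μ := by
          rw [zero_add, lintegral_finset_sum _ (fun a _ => (hma a).const_mul _)]
          exact Finset.sum_congr rfl fun a _ => lintegral_const_mul _ (hma a)
      _ = 0 := by
          refine Finset.sum_eq_zero fun a _ => ?_
          have h := G n [a] (List.cons_ne_nil a [])
          have h2 : ∫⁻ x, Z.indicator 1 x * chainU P T Z n (T a x) ∂μ = 0 := by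
            simpa [wordComp_cons_apply, wordComp_nil_apply] using h
          rw [h2, mul_zero]

theorem aux_key (hP1 : ∑ a, P a = 1)
    (hT : ∀ a, Measurable (T a)) (hZm : MeasurableSet Z)
    (hμ : IsProbabilityMeasure μ)
    (hinv : ∀ h : ℝ → ℝ≥0∞, Measurable h →
      ∫⁻ x, ∑ a, P a * h (T a x) ∂μ = ∫⁻ x, h x ∂μ)
    (hZ : 0 < μ Z) :
    ∃ l : List (Fin m), l ≠ [] ∧ 0 < μ (Z ∩ wordComp T l ⁻¹' Z) := by
  by_contra hcon
  push_neg at hcon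
  have hzero : ∀ l : List (Fin m), l ≠ [] → μ (Z ∩ wordComp T l ⁻¹' Z) = 0 :=
    fun l hl => le_antisymm (hcon l hl) zero_le
  have key : ∀ n : ℕ, ((n : ℝ≥0∞) + 1) * μ Z ≤ 1 := by
    intro n
    have h1 : ∫⁻ x, chainU P T Z n x ∂μ = (n + 1) * μ Z :=
      lintegral_chainU hT hZm hinv n
    have h2 : ∫⁻ x, chainV P T Z n x ∂μ = 0 :=
      lintegral_chainV hT hZm hinv hzero n
    have h3 : ∫⁻ x, chainU P T Z n x ∂μ ≤ ∫⁻ x, (1 + chainV P T Z n x) ∂μ :=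
      lintegral_mono (chainU_le hP1 n)
    have h4 : ∫⁻ x, (1 + chainV P T Z n x) ∂μ = 1 := by
      rw [lintegral_add_left measurable_const, h2, add_zero, lintegral_one, measure_univ]
    rw [h1, h4] at h3
    exact h3
  have hZne : μ Z ≠ 0 := hZ.ne'
  have hZ1 : μ Z ≤ 1 := prob_le_one
  have hZtop : μ Z ≠ ⊤ := (lt_of_le_of_lt hZ1 ENNReal.one_lt_top).ne
  obtain ⟨n, hn⟩ := ENNReal.exists_nat_gt (ENNReal.inv_ne_top.mpr hZne)
  have h5 : (1 : ℝ≥0∞) < (n : ℝ≥0∞) * μ Z := by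
    rw [← ENNReal.inv_mul_cancel hZne hZtop]
    exact ENNReal.mul_lt_mul_left hZne hZtop hn
  have h6 : (n : ℝ≥0∞) * μ Z ≤ ((n : ℝ≥0∞) + 1) * μ Z := by
    gcongr; exact le_self_add
  exact absurd (lt_of_lt_of_le h5 (le_trans h6 (key n))) (by simp)

end aux

/-- Let `μ` be a self-similar measure on `[0,1]` for similarities `T_a`, `f` a `C²` map on
`[0,1]` with nonvanishing derivative, `g` a two-sided inverse of `f`, and
`S_a = f ∘ T_a ∘ g`. If `μ({f'' = 0}) > 0` and `f_*μ` is self-conformal for `{S_a}`, then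
there is a nonempty word `w` with `f_*μ({y : (S_w)''(y) = 0}) > 0`. -/
theorem stmt4 (m : ℕ) (hm : 0 < m) (r c p : Fin m → ℝ)
    (hr : ∀ a, 0 < |r a| ∧ |r a| < 1)
    (hmaps : ∀ a, MapsTo (fun x : ℝ => r a * x + c a) (Set.Icc 0 1) (Set.Icc 0 1))
    (hp : ∀ a, 0 < p a) (hpsum : ∑ a, p a = 1)
    (μ : Measure ℝ) (hprob : IsProbabilityMeasure μ) (hna : ∀ x : ℝ, μ {x} = 0)
    (hsupp : μ (Set.Icc (0 : ℝ) 1) = 1)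
    (hinv : μ = ∑ a, ENNReal.ofReal (p a) • Measure.map (fun x : ℝ => r a * x + c a) μ)
    (f : ℝ → ℝ) (hf : ContDiffOn ℝ 2 f (Set.Icc 0 1))
    (hf' : ∀ x ∈ Set.Icc (0 : ℝ) 1, derivWithin f (Set.Icc 0 1) x ≠ 0)
    (g : ℝ → ℝ) (hg1 : ∀ x ∈ Set.Icc (0 : ℝ) 1, g (f x) = x)
    (hg2 : ∀ y ∈ f '' Set.Icc (0 : ℝ) 1, f (g y) = y)
    (S : Fin m → ℝ → ℝ) (hS : ∀ a, S a = fun y => f (r a * g y + c a))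
    (hZ : 0 < μ {x ∈ Set.Icc (0 : ℝ) 1 | iteratedDerivWithin 2 f (Set.Icc 0 1) x = 0})
    (hconf : Measure.map f μ =
      ∑ a, ENNReal.ofReal (p a) • Measure.map (S a) (Measure.map f μ)) :
    ∃ l : List (Fin m), l ≠ [] ∧
      0 < Measure.map f μ
        {y ∈ f '' Set.Icc (0 : ℝ) 1 |
          iteratedDerivWithin 2 (wordComp S l) (f '' Set.Icc (0 : ℝ) 1) y = 0} := by
  classical
  set s : Set ℝ := Set.Icc 0 1 with hs_def
  set J : Set ℝ := f '' s with hJ_def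
  set D : ℝ → ℝ := derivWithin f s with hD_def
  set f₂ : ℝ → ℝ := iteratedDerivWithin 2 f s with hf2_def
  set Tf : Fin m → ℝ → ℝ := fun a x => r a * x + c a with hTf_def
  set Z : Set ℝ := {x ∈ s | f₂ x = 0} with hZ_def
  set Z' : Set ℝ := Z ∩ Set.Ioo 0 1 with hZ'_def
  -- basic calculus facts
  have hs_ud : UniqueDiffOn ℝ s := uniqueDiffOn_Icc zero_lt_one
  have hfc : ContinuousOn f s := hf.continuousOn
  have hD_cd : ContDiffOn ℝ 1 D s := hf.derivWithin hs_ud (by norm_num)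
  have hD_diff : DifferentiableOn ℝ D s := hD_cd.differentiableOn one_ne_zero
  have hf2_eq : ∀ x ∈ s, f₂ x = derivWithin D s x := by
    intro x hx
    rw [hf2_def, show (2:ℕ) = 1+1 from rfl,
      iteratedDerivWithin_succ]
    exact derivWithin_congr
      (fun z hz => congrFun iteratedDerivWithin_one z)
      (congrFun iteratedDerivWithin_one x)
  have hf2_cont : ContinuousOn f₂ s :=
    hf.continuousOn_iteratedDerivWithin (by norm_num) hs_ud
  -- Z is measurable, Z' has positive measure
  have hZm : MeasurableSet Z := by
    have : Z = s ∩ f₂ ⁻¹' {0} := by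
      ext x; simp [hZ_def, Set.mem_setOf_eq, Set.mem_inter_iff]
    rw [this]
    exact (hf2_cont.preimage_isClosed_of_isClosed isClosed_Icc isClosed_singleton).measurableSet
  have hZ'm : MeasurableSet Z' := hZm.inter measurableSet_Ioo
  have hZ'pos : 0 < μ Z' := by
    have hsub : Z ⊆ Z' ∪ ({0} ∪ {1}) := by
      intro x hx
      rcases eq_or_ne x 0 with h0 | h0
      · exact Or.inr (Or.inl (by simp [h0]))
      rcases eq_or_ne x 1 with h1 | h1
      · exact Or.inr (Or.inr (by simp [h1]))
      · exact Or.inl ⟨hx, lt_of_le_of_ne hx.1.1 (Ne.symm h0), lt_of_le_of_ne hx.1.2 h1⟩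
    have h1 : μ Z ≤ μ Z' + (μ {0} + μ {1}) :=
      le_trans (measure_mono hsub) (le_trans (measure_union_le _ _)
        (by gcongr; exact measure_union_le _ _))
    rw [hna 0, hna 1, add_zero, add_zero] at h1
    exact lt_of_lt_of_le hZ h1
  -- the measure recurrence gives a word
  have hTfm : ∀ a, Measurable (Tf a) :=
    fun a => ((continuous_const.mul continuous_id).add continuous_const).measurable
  have hP1 : ∑ a, ENNReal.ofReal (p a) = 1 := by
    rw [← ENNReal.ofReal_sum_of_nonneg (fun a _ => (hp a).le), hpsum, ENNReal.ofReal_one]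
  have hinvL : ∀ h : ℝ → ℝ≥0∞, Measurable h →
      ∫⁻ x, ∑ a, ENNReal.ofReal (p a) * h (Tf a x) ∂μ = ∫⁻ x, h x ∂μ := by
    intro h hh
    have hma : ∀ a : Fin m, Measurable fun x => h (Tf a x) := fun a => hh.comp (hTfm a)
    have hmf : ∀ a : Fin m, Measurable fun x => ENNReal.ofReal (p a) * h (Tf a x) :=
      fun a => measurable_const.mul (hma a)
    calc ∫⁻ x, ∑ a, ENNReal.ofReal (p a) * h (Tf a x) ∂μ
        = ∑ a, ENNReal.ofReal (p a) * ∫⁻ x, h (Tf a x) ∂μ := by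
          rw [lintegral_finset_sum _ (fun a _ => hmf a)]
          exact Finset.sum_congr rfl fun a _ => lintegral_const_mul _ (hma a)
      _ = ∑ a, ENNReal.ofReal (p a) * ∫⁻ y, h y ∂(Measure.map (Tf a) μ) := by
          exact Finset.sum_congr rfl fun a _ => by rw [lintegral_map hh (hTfm a)]
      _ = ∫⁻ y, h y ∂(∑ a, ENNReal.ofReal (p a) • Measure.map (Tf a) μ) := by
          rw [lintegral_finset_sum_measure]
          exact Finset.sum_congr rfl fun a _ => by rw [lintegral_smul_measure, smul_eq_mul]
      _ = ∫⁻ y, h y ∂μ := by rw [← hinv]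
  obtain ⟨l, hl, hpos⟩ := aux_key hP1 hTfm hZ'm hprob hinvL hZ'pos
  refine ⟨l, hl, ?_⟩
  -- interval structure of J
  have hJcomp : IsCompact J := isCompact_Icc.image_of_continuousOn hfc
  have hJconn : IsPreconnected J := (isPreconnected_Icc).image f hfc
  have h0s : (0:ℝ) ∈ s := by rw [hs_def]; exact ⟨le_refl 0, zero_le_one⟩
  have h1s : (1:ℝ) ∈ s := by rw [hs_def]; exact ⟨zero_le_one, le_refl 1⟩
  have hJne : J.Nonempty := ⟨f 0, Set.mem_image_of_mem f h0s⟩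
  have hinj : InjOn f s := fun x hx y hy hxy => by rw [← hg1 x hx, hxy, hg1 y hy]
  obtain ⟨cJ, dJ, hJeq⟩ : ∃ cJ dJ, J = Set.Icc cJ dJ :=
    ⟨_, _, eq_Icc_of_connected_compact ⟨hJne, hJconn⟩ hJcomp⟩
  have hf01 : f 0 ≠ f 1 := fun h => zero_ne_one (hinj h0s h1s h)
  have hcd : cJ < dJ := by
    by_contra hle
    push_neg at hle
    have h0 : f 0 ∈ Set.Icc cJ dJ := hJeq ▸ Set.mem_image_of_mem f h0s
    have h1 : f 1 ∈ Set.Icc cJ dJ := hJeq ▸ Set.mem_image_of_mem f h1s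
    exact hf01 (le_antisymm (le_trans h0.2 (le_trans hle h1.1))
      (le_trans h1.2 (le_trans hle h0.1)))
  have hJ_ud : UniqueDiffOn ℝ J := hJeq ▸ uniqueDiffOn_Icc hcd
  have hJint : interior J = Set.Ioo cJ dJ := by rw [hJeq]; exact interior_Icc
  -- full derivatives at interior points
  have hfD : ∀ x ∈ Set.Ioo (0:ℝ) 1, HasDerivAt f (D x) x := by
    intro x hx
    have hxs : x ∈ s := Set.Ioo_subset_Icc_self hx
    have h1 := ((hf.differentiableOn (by norm_num)) x hxs).hasDerivWithinAt
    exact h1.hasDerivAt (by rw [hs_def]; exact Icc_mem_nhds hx.1 hx.2)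
  have hDD : ∀ x ∈ Set.Ioo (0:ℝ) 1, HasDerivAt D (f₂ x) x := by
    intro x hx
    have hxs : x ∈ s := Set.Ioo_subset_Icc_self hx
    have h1 := (hD_diff x hxs).hasDerivWithinAt
    rw [← hf2_eq x hxs] at h1
    exact h1.hasDerivAt (by rw [hs_def]; exact Icc_mem_nhds hx.1 hx.2)
  -- interior points are not extremal
  have hnotext : ∀ x ∈ Set.Ioo (0:ℝ) 1, f x ≠ cJ ∧ f x ≠ dJ := by
    intro x hx
    have hxs : x ∈ s := Set.Ioo_subset_Icc_self hx
    have hD0 : deriv f x = D x := (hfD x hx).deriv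
    have hnhds : s ∈ 𝓝 x := by rw [hs_def]; exact Icc_mem_nhds hx.1 hx.2
    constructor
    · intro hmin
      have hmin' : IsMinOn f s x := isMinOn_iff.mpr fun z hz => by
        rw [hmin]
        exact (hJeq ▸ Set.mem_image_of_mem f hz : f z ∈ Set.Icc cJ dJ).1
      have h0 := (hmin'.isLocalMin hnhds).deriv_eq_zero
      rw [hD0] at h0
      exact hf' x hxs h0
    · intro hmax
      have hmax' : IsMaxOn f s x := isMaxOn_iff.mpr fun z hz => by
        rw [hmax]
        exact (hJeq ▸ Set.mem_image_of_mem f hz : f z ∈ Set.Icc cJ dJ).2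
      have h0 := (hmax'.isLocalMax hnhds).deriv_eq_zero
      rw [hD0] at h0
      exact hf' x hxs h0
  have hfx_int : ∀ x ∈ Set.Ioo (0:ℝ) 1, f x ∈ interior J := by
    intro x hx
    have hxJ : f x ∈ Set.Icc cJ dJ :=
      hJeq ▸ Set.mem_image_of_mem f (Set.Ioo_subset_Icc_self hx)
    rw [hJint]
    exact ⟨lt_of_le_of_ne hxJ.1 (Ne.symm (hnotext x hx).1),
      lt_of_le_of_ne hxJ.2 (hnotext x hx).2⟩
  -- endpoints of J are attained at 0 or 1
  have hends : f 0 ∉ interior J ∧ f 1 ∉ interior J := by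
    have hcmem : cJ ∈ J := by rw [hJeq]; exact ⟨le_rfl, hcd.le⟩
    have hdmem : dJ ∈ J := by rw [hJeq]; exact ⟨hcd.le, le_rfl⟩
    obtain ⟨xm, hxm, hfxm⟩ := hcmem
    obtain ⟨xM, hxM, hfxM⟩ := hdmem
    have hxm01 : xm = 0 ∨ xm = 1 := by
      by_contra hcon2
      push_neg at hcon2
      exact (hnotext xm ⟨lt_of_le_of_ne hxm.1 (Ne.symm hcon2.1),
        lt_of_le_of_ne hxm.2 hcon2.2⟩).1 hfxm
    have hxM01 : xM = 0 ∨ xM = 1 := by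
      by_contra hcon2
      push_neg at hcon2
      exact (hnotext xM ⟨lt_of_le_of_ne hxM.1 (Ne.symm hcon2.1),
        lt_of_le_of_ne hxM.2 hcon2.2⟩).2 hfxM
    have hmM : xm ≠ xM := fun h => hcd.ne (by rw [← hfxm, h, hfxM])
    have h0cd : f 0 = cJ ∨ f 0 = dJ := by
      rcases hxm01 with h | h
      · exact Or.inl (h ▸ hfxm)
      · rcases hxM01 with h' | h'
        · exact Or.inr (h' ▸ hfxM)
        · exact absurd (h.trans h'.symm) hmM
    have h1cd : f 1 = cJ ∨ f 1 = dJ := by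
      rcases hxm01 with h | h
      · rcases hxM01 with h' | h'
        · exact absurd (h.trans h'.symm) hmM
        · exact Or.inr (h' ▸ hfxM)
      · exact Or.inl (h ▸ hfxm)
    have hnotint : ∀ w : ℝ, (w = cJ ∨ w = dJ) → w ∉ interior J := by
      intro w hw
      rw [hJint]
      rcases hw with h | h <;> rw [h] <;> intro hmem
      · exact lt_irrefl _ hmem.1
      · exact lt_irrefl _ hmem.2
    exact ⟨hnotint _ h0cd, hnotint _ h1cd⟩
  have hgint : ∀ y ∈ interior J, g y ∈ Set.Ioo (0:ℝ) 1 := by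
    intro y hy
    obtain ⟨x, hx, rfl⟩ := interior_subset hy
    rw [hg1 x hx]
    by_contra hcon2
    have hx01 : x = 0 ∨ x = 1 := by
      rcases lt_or_eq_of_le hx.1 with h | h
      · rcases lt_or_eq_of_le hx.2 with h2 | h2
        · exact absurd ⟨h, h2⟩ hcon2
        · exact Or.inr h2
      · exact Or.inl h.symm
    rcases hx01 with h | h
    · exact hends.1 (h ▸ hy)
    · exact hends.2 (h ▸ hy)
  -- continuity of g on J
  have hgs : ∀ y ∈ J, g y ∈ s := by
    rintro y ⟨x, hx, rfl⟩
    rw [hg1 x hx]; exact hx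
  have hgJ : ContinuousOn g J := by
    haveI : CompactSpace ↥s := isCompact_iff_compactSpace.mp isCompact_Icc
    let e : ↥s ≃ ↥J :=
      { toFun := fun x => ⟨f x, Set.mem_image_of_mem f x.2⟩
        invFun := fun y => ⟨g y, hgs y y.2⟩
        left_inv := fun x => Subtype.ext (hg1 x x.2)
        right_inv := fun y => Subtype.ext (hg2 y y.2) }
    have hec : Continuous (e : ↥s → ↥J) := (hfc.restrict).subtype_mk _
    let he := Continuous.homeoOfEquivCompactToT2 (f := e) hec
    rw [continuousOn_iff_continuous_restrict]
    exact continuous_subtype_val.comp he.symm.continuous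
  have hg_deriv : ∀ y ∈ interior J, HasDerivAt g (D (g y))⁻¹ y := by
    intro y hy
    have hyJ : y ∈ J := interior_subset hy
    have hJy : J ∈ 𝓝 y := mem_interior_iff_mem_nhds.mp hy
    have hgc : ContinuousAt g y := (hgJ y hyJ).continuousAt hJy
    have hgyI : g y ∈ Set.Ioo (0:ℝ) 1 := hgint y hy
    have hfd : HasDerivAt f (D (g y)) (g y) := hfD _ hgyI
    have hfg : ∀ᶠ y' in 𝓝 y, f (g y') = y' := by
      filter_upwards [hJy] with y' hy'
      exact hg2 y' hy'
    exact HasDerivAt.of_local_left_inverse hgc hfd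
      (hf' (g y) (Set.Ioo_subset_Icc_self hgyI)) hfg
  -- affine structure of word maps
  have hTl_aff : ∀ l' : List (Fin m), ∃ R C : ℝ, R ≠ 0 ∧
      wordComp Tf l' = fun x => R * x + C := by
    intro l'
    induction l' with
    | nil => exact ⟨1, 0, one_ne_zero, by funext x; simp [wordComp]⟩
    | cons a t ih =>
      obtain ⟨R, C, hR, hE⟩ := ih
      refine ⟨r a * R, r a * C + c a, mul_ne_zero (abs_pos.mp (hr a).1) hR, ?_⟩
      funext x
      show Tf a (wordComp Tf t x) = _
      rw [hE]
      show r a * (R * x + C) + c a = _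
      ring
  have hTl_maps : ∀ l' : List (Fin m), Set.MapsTo (wordComp Tf l') s s := by
    intro l'
    induction l' with
    | nil => exact fun x hx => hx
    | cons a t ih => exact fun x hx => hmaps a (ih hx)
  have hTl_Ioo : ∀ l' : List (Fin m),
      Set.MapsTo (wordComp Tf l') (Set.Ioo 0 1) (Set.Ioo 0 1) := by
    intro l'
    obtain ⟨R, C, hR, hE⟩ := hTl_aff l'
    have hopen : IsOpen (wordComp Tf l' '' Set.Ioo 0 1) := by
      rw [hE]
      exact (affineHomeomorph R C hR).isOpenMap _ isOpen_Ioo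
    have hsub : wordComp Tf l' '' Set.Ioo 0 1 ⊆ s := by
      rintro y2 ⟨x2, hx2, rfl⟩
      exact hTl_maps l' (Set.Ioo_subset_Icc_self hx2)
    have hsubI : wordComp Tf l' '' Set.Ioo 0 1 ⊆ Set.Ioo 0 1 := by
      have h2 := interior_maximal hsub hopen
      rw [hs_def, interior_Icc] at h2
      exact h2
    exact fun x hx => hsubI (Set.mem_image_of_mem _ hx)
  -- wordComp S equals f ∘ T_l ∘ g on J
  have hSw : ∀ l' : List (Fin m), ∀ y ∈ J, wordComp S l' y = f (wordComp Tf l' (g y)) := by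
    intro l'
    induction l' with
    | nil =>
      intro y hy
      exact (hg2 y hy).symm
    | cons a t ih =>
      intro y hy
      have hws : wordComp Tf t (g y) ∈ s := hTl_maps t (hgs y hy)
      rw [wordComp_cons_apply, ih y hy, hS a]
      show f (r a * g (f (wordComp Tf t (g y))) + c a) = _
      rw [hg1 _ hws]
      rfl
  -- the key second-derivative computation
  have hkey : ∀ x, x ∈ Z → x ∈ Set.Ioo (0:ℝ) 1 → wordComp Tf l x ∈ Z →
      iteratedDerivWithin 2 (wordComp S l) J (f x) = 0 := by
    intro x hxZ hxI hTZ
    obtain ⟨R, C, hR, hE⟩ := hTl_aff l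
    have hTd : ∀ z : ℝ, HasDerivAt (wordComp Tf l) R z := by
      intro z
      rw [hE]
      simpa using ((hasDerivAt_id z).const_mul R).add_const C
    have hxs : x ∈ s := Set.Ioo_subset_Icc_self hxI
    have hyJ : f x ∈ J := Set.mem_image_of_mem f hxs
    have hyint : f x ∈ interior J := hfx_int x hxI
    have hcongr : Set.EqOn (wordComp S l) (fun y' => f (wordComp Tf l (g y'))) J :=
      fun y' hy' => hSw l y' hy'
    rw [iteratedDerivWithin_congr hcongr hyJ]
    set ψ : ℝ → ℝ := fun y' => D (wordComp Tf l (g y')) * (R * (D (g y'))⁻¹) with hψ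
    have hderiv1 : ∀ y' ∈ interior J,
        HasDerivAt (fun t => f (wordComp Tf l (g t))) (ψ y') y' := by
      intro y' hy'
      have hgy' : g y' ∈ Set.Ioo (0:ℝ) 1 := hgint y' hy'
      have hgd : HasDerivAt g (D (g y'))⁻¹ y' := hg_deriv y' hy'
      have hTgI : wordComp Tf l (g y') ∈ Set.Ioo (0:ℝ) 1 := hTl_Ioo l hgy'
      have h2 : HasDerivAt (fun t => wordComp Tf l (g t)) (R * (D (g y'))⁻¹) y' :=
        HasDerivAt.comp y' (hTd (g y')) hgd
      exact HasDerivAt.comp y' (hfD _ hTgI) h2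
    have hdw : ∀ y' ∈ interior J,
        derivWithin (fun t => f (wordComp Tf l (g t))) J y' = ψ y' := by
      intro y' hy'
      rw [derivWithin_of_mem_nhds (mem_interior_iff_mem_nhds.mp hy')]
      exact (hderiv1 y' hy').deriv
    have h2eq : iteratedDerivWithin 2 (fun t => f (wordComp Tf l (g t))) J (f x)
        = derivWithin (iteratedDerivWithin 1 (fun t => f (wordComp Tf l (g t))) J) J (f x) :=
      congrFun iteratedDerivWithin_succ _
    rw [h2eq]
    have hev : iteratedDerivWithin 1 (fun t => f (wordComp Tf l (g t))) J =ᶠ[𝓝[J] (f x)] ψ := by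
      have hint : ∀ᶠ y' in 𝓝[J] (f x), y' ∈ interior J :=
        mem_nhdsWithin_of_mem_nhds (isOpen_interior.mem_nhds hyint)
      filter_upwards [hint] with y' hy'
      rw [iteratedDerivWithin_one]
      exact hdw y' hy'
    have hat : iteratedDerivWithin 1 (fun t => f (wordComp Tf l (g t))) J (f x) = ψ (f x) := by
      rw [iteratedDerivWithin_one]
      exact hdw _ hyint
    rw [hev.derivWithin_eq hat,
      derivWithin_of_mem_nhds (mem_interior_iff_mem_nhds.mp hyint)]
    -- now compute deriv ψ (f x)
    have hgx : g (f x) = x := hg1 x hxs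
    have hgd : HasDerivAt g (D x)⁻¹ (f x) := by
      have h0 := hg_deriv (f x) hyint
      rwa [hgx] at h0
    have hDx : D x ≠ 0 := hf' x hxs
    have hTx : wordComp Tf l x ∈ Set.Ioo (0:ℝ) 1 := hTl_Ioo l hxI
    have hf2x : f₂ x = 0 := hxZ.2
    have hf2Tx : f₂ (wordComp Tf l x) = 0 := hTZ.2
    have h2 : HasDerivAt (fun t => wordComp Tf l (g t)) (R * (D x)⁻¹) (f x) :=
      HasDerivAt.comp (f x) (hTd (g (f x))) hgd
    have hA : HasDerivAt (fun t => D (wordComp Tf l (g t)))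
        (f₂ (wordComp Tf l x) * (R * (D x)⁻¹)) (f x) := by
      have h1 : HasDerivAt D (f₂ (wordComp Tf l x)) (wordComp Tf l (g (f x))) := by
        rw [hgx]; exact hDD _ hTx
      exact HasDerivAt.comp (f x) h1 h2
    have hB : HasDerivAt (fun t => (D (g t))⁻¹)
        (-(f₂ x * (D x)⁻¹) / D (g (f x)) ^ 2) (f x) := by
      have hDg : HasDerivAt (fun t => D (g t)) (f₂ x * (D x)⁻¹) (f x) := by
        have h1 : HasDerivAt D (f₂ x) (g (f x)) := by rw [hgx]; exact hDD _ hxI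
        exact HasDerivAt.comp (f x) h1 hgd
      exact hDg.inv (by rw [hgx]; exact hDx)
    have hψd : HasDerivAt ψ
        (f₂ (wordComp Tf l x) * (R * (D x)⁻¹) * (R * (D (g (f x)))⁻¹)
          + D (wordComp Tf l (g (f x))) * (R * (-(f₂ x * (D x)⁻¹) / D (g (f x)) ^ 2))) (f x) :=
      hA.mul (hB.const_mul R)
    have hd0 : deriv ψ (f x) = 0 := by
      rw [hf2x, hf2Tx] at hψd
      simpa using hψd.deriv
    exact hd0
  -- conclusion via pushforward
  have hfae : AEMeasurable f μ := by
    have hclamp : Continuous fun x : ℝ => min 1 (max 0 x) :=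
      continuous_const.min (continuous_const.max continuous_id)
    have hmapsc : ∀ x : ℝ, min 1 (max 0 x) ∈ s := by
      intro x
      rw [hs_def]
      exact ⟨le_min zero_le_one (le_max_left 0 x), min_le_left _ _⟩
    have hcont : Continuous fun x => f (min 1 (max 0 x)) :=
      hfc.comp_continuous hclamp hmapsc
    have hsc : μ sᶜ = 0 := by
      rw [measure_compl (hs_def ▸ measurableSet_Icc) (measure_ne_top μ s), hsupp,
        measure_univ, tsub_self]
    have hae_s : ∀ᵐ x ∂μ, x ∈ s := by
      refine (ae_iff).mpr ?_
      simpa [Set.compl_def] using hsc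
    have hae : f =ᵐ[μ] fun x => f (min 1 (max 0 x)) := by
      filter_upwards [hae_s] with x hx
      rw [max_eq_right hx.1, min_eq_right hx.2]
    exact (hcont.measurable.aemeasurable).congr hae.symm
  have hsubset : f '' (Z' ∩ wordComp Tf l ⁻¹' Z') ⊆
      {y ∈ J | iteratedDerivWithin 2 (wordComp S l) J y = 0} := by
    rintro y ⟨x, hx, rfl⟩
    exact ⟨Set.mem_image_of_mem f (Set.Ioo_subset_Icc_self hx.1.2),
      hkey x hx.1.1 hx.1.2 hx.2.1⟩
  calc (0:ℝ≥0∞) < μ (Z' ∩ wordComp Tf l ⁻¹' Z') := hpos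
    _ ≤ μ (f ⁻¹' (f '' (Z' ∩ wordComp Tf l ⁻¹' Z'))) :=
        measure_mono (Set.subset_preimage_image f _)
    _ ≤ Measure.map f μ (f '' (Z' ∩ wordComp Tf l ⁻¹' Z')) := Measure.le_map_apply hfae _
    _ ≤ Measure.map f μ {y ∈ J | iteratedDerivWithin 2 (wordComp S l) J y = 0} :=
        measure_mono hsubset
end

section
/- Let d ≥ 1 be an integer and let φ : [0,∞) → (0,1] satisfy φ(ξ) → 0 as ξ → ∞. Then there exists a dense G_δ set A ⊆ [0,1] such that for all t ∈ A, the d-fold product measure μ_t^d = μ_t × ⋯ × μ_t on ℝ^d is Rajchman (i.e. its Fourier transform μ̂_t^d(ξ) = ∫ e^{2πi⟨ξ,x⟩} dμ_t^d(x) tends to 0 as ‖ξ‖ → ∞) and limsup_{ξ → ∞} |μ̂_t^d((ξ, 0, …, 0))| / φ(ξ) > 0. -/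
open MeasureTheory Filter Set
open scoped ENNReal NNReal Real

/-- The Fourier transform of a measure on `ℝ^d`: `ν̂(ξ) = ∫ e^{2πi⟨ξ,x⟩} dν(x)`. -/
noncomputable def ftd {d : ℕ} (ν : Measure (Fin d → ℝ)) (ξ : Fin d → ℝ) : ℂ :=
  ∫ x, Complex.exp (((2 * Real.pi * ∑ i, ξ i * x i : ℝ) : ℂ) * Complex.I) ∂ν

/-- `μ_t` is invariant for the IFS `{x/10, (x+1)/10, (x+t)/10}` with weights `(1/3,1/3,1/3)`. -/
def muInv (t : ℝ) (μ : Measure ℝ) : Prop :=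
  μ = (3 : ℝ≥0∞)⁻¹ • (Measure.map (fun x : ℝ => x / 10) μ +
    Measure.map (fun x : ℝ => (x + 1) / 10) μ + Measure.map (fun x : ℝ => (x + t) / 10) μ)

noncomputable def Complex.abs : AbsoluteValue ℂ ℝ := NormedField.toAbsoluteValue ℂ

lemma Complex.norm_eq_abs (z : ℂ) : ‖z‖ = Complex.abs z := rfl

lemma Complex.abs_I : Complex.abs Complex.I = 1 := Complex.norm_I

lemma Complex.abs_ofReal (r : ℝ) : Complex.abs (r : ℂ) = |r| := Complex.norm_real r

lemma Complex.abs_conj (z : ℂ) : Complex.abs (starRingEnd ℂ z) = Complex.abs z :=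
  Complex.norm_conj z

lemma Complex.abs_def (z : ℂ) : Complex.abs z = Real.sqrt (Complex.normSq z) := rfl

lemma Complex.abs_exp_ofReal_mul_I (x : ℝ) : Complex.abs (Complex.exp (x * Complex.I)) = 1 :=
  Complex.norm_exp_ofReal_mul_I x

lemma Complex.abs_exp_sub_one_le {x : ℂ} (hx : Complex.abs x ≤ 1) :
    Complex.abs (Complex.exp x - 1) ≤ 2 * Complex.abs x :=
  Complex.norm_exp_sub_one_le hx

namespace Stmt10

noncomputable section

/-- `E x = e^{2πix}`. -/
def E (x : ℝ) : ℂ := Complex.exp ((2 * Real.pi * x : ℝ) * Complex.I)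

/-- one-dimensional Fourier transform -/
def FT (μ : Measure ℝ) (ξ : ℝ) : ℂ := ∫ x, E (ξ * x) ∂μ

/-- the symbol of the IFS -/
def g (t u : ℝ) : ℂ := (1 + E u + E (t * u)) / 3

/-- distance to the nearest integer -/
def fd (x : ℝ) : ℝ := |x - round x|

lemma E_add (a b : ℝ) : E (a + b) = E a * E b := by
  rw [E, E, E, ← Complex.exp_add]; congr 1; push_cast; ring

lemma E_zero : E 0 = 1 := by simp [E]

lemma abs_E (x : ℝ) : Complex.abs (E x) = 1 := by
  rw [E]; exact_mod_cast Complex.abs_exp_ofReal_mul_I _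

lemma E_int (n : ℤ) : E n = 1 := by
  rw [E]
  have : ((2 * Real.pi * (n:ℝ) : ℝ) : ℂ) * Complex.I = n * (2 * Real.pi * Complex.I) := by
    push_cast; ring
  rw [this, Complex.exp_int_mul_two_pi_mul_I]

lemma E_neg (a : ℝ) : E (-a) = starRingEnd ℂ (E a) := by
  rw [E, E, ← Complex.exp_conj, map_mul, Complex.conj_I, Complex.conj_ofReal]
  push_cast; ring_nf

lemma abs_E_sub_one_le {x : ℝ} (hx : |x| ≤ 1/8) :
    Complex.abs (E x - 1) ≤ 4 * π * |x| := by
  have habs : Complex.abs (((2 * π * x : ℝ) : ℂ) * Complex.I) = 2 * π * |x| := by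
    rw [map_mul, Complex.abs_I, Complex.abs_ofReal, mul_one, abs_mul]
    have : |2 * π| = 2 * π := abs_of_pos (by positivity)
    rw [this]
  have h1 : Complex.abs (((2 * π * x : ℝ) : ℂ) * Complex.I) ≤ 1 := by
    rw [habs]
    nlinarith [Real.pi_lt_d2, Real.pi_pos, abs_nonneg x]
  have := Complex.abs_exp_sub_one_le h1
  rw [habs] at this
  calc Complex.abs (E x - 1) ≤ 2 * (2 * π * |x|) := this
    _ = 4 * π * |x| := by ring

lemma two_cos_eq (a : ℝ) : E (-(a/2)) + E (a/2) = 2 * Complex.cos (π * a) := by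
  have h : E (a/2) = Complex.exp ((π * a : ℝ) * Complex.I) := by
    rw [E]; norm_num; ring_nf
  have h' : E (-(a/2)) = Complex.exp (-((π * a : ℝ) * Complex.I)) := by
    rw [E]; congr 1; push_cast; ring
  rw [h, h', Complex.two_cos]
  push_cast
  ring_nf

lemma abs_one_add_E (a : ℝ) : Complex.abs (1 + E a) = 2 * |Real.cos (π * a)| := by
  have h1 : E (a/2) * (E (-(a/2)) + E (a/2)) = 1 + E a := by
    rw [mul_add, ← E_add, ← E_add]
    norm_num [E_zero]
  rw [← h1, map_mul, abs_E, one_mul, two_cos_eq, map_mul]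
  have : Complex.cos (↑π * ↑a) = ((Real.cos (π * a) : ℝ) : ℂ) := by
    rw [Complex.ofReal_cos]; push_cast; rfl
  rw [this, Complex.abs_ofReal]
  norm_num [← Complex.norm_eq_abs]

lemma abs_three : Complex.abs (3 : ℂ) = 3 := by
  norm_num [Complex.abs_def, Complex.normSq]

lemma abs_g_le_one (t u : ℝ) : Complex.abs (g t u) ≤ 1 := by
  rw [g, map_div₀, abs_three]
  have : Complex.abs (1 + E u + E (t * u)) ≤ 3 := by
    calc Complex.abs (1 + E u + E (t * u)) ≤ Complex.abs (1 + E u) + Complex.abs (E (t*u)) :=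
        Complex.abs.add_le _ _
      _ ≤ (Complex.abs (1:ℂ) + Complex.abs (E u)) + Complex.abs (E (t*u)) := by
        gcongr; exact Complex.abs.add_le _ _
      _ = 3 := by rw [abs_E, abs_E, map_one]; norm_num
  linarith


lemma tri (z w : ℂ) : Complex.abs z - Complex.abs w ≤ Complex.abs (z + w) := by
  have := norm_sub_norm_le z (-w)
  simpa [Complex.norm_eq_abs] using this

lemma abs_g_sub_one {t : ℝ} (ht : t ∈ Icc (0:ℝ) 1) {u : ℝ} (hu : |u| ≤ 1/8) :
    Complex.abs (g t u - 1) ≤ (8*π/3) * |u| := by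
  have htu : |t * u| ≤ |u| := by
    rw [abs_mul]
    calc |t| * |u| ≤ 1 * |u| := by
          apply mul_le_mul_of_nonneg_right _ (abs_nonneg u)
          rw [abs_of_nonneg ht.1]; exact ht.2
      _ = |u| := one_mul _
  have h1 : g t u - 1 = ((E u - 1) + (E (t*u) - 1))/3 := by rw [g]; ring
  rw [h1, map_div₀, abs_three]
  have h2 : Complex.abs ((E u - 1) + (E (t*u) - 1)) ≤ 4*π*|u| + 4*π*|t*u| := by
    calc Complex.abs ((E u - 1) + (E (t*u) - 1)) ≤
        Complex.abs (E u - 1) + Complex.abs (E (t*u) - 1) := Complex.abs.add_le _ _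
      _ ≤ 4*π*|u| + 4*π*|t*u| := by
          gcongr
          · exact abs_E_sub_one_le hu
          · exact abs_E_sub_one_le (le_trans htu hu)
  have h3 : 4*π*|u| + 4*π*|t*u| ≤ 8*π*|u| := by nlinarith [Real.pi_pos]
  calc Complex.abs ((E u - 1) + (E (t*u) - 1)) / 3 ≤ (8*π*|u|)/3 := by linarith
    _ = (8*π/3) * |u| := by ring

lemma abs_g_int_ge (t : ℝ) (n : ℤ) : (1:ℝ)/3 ≤ Complex.abs (g t n) := by
  have h1 : g t (n:ℝ) = (2 + E (t*n))/3 := by rw [g, E_int]; ring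
  rw [h1, map_div₀, abs_three]
  have h2 : Complex.abs (2:ℂ) = 2 := by norm_num [Complex.abs_def, Complex.normSq]
  have := tri (2:ℂ) (E (t*n))
  rw [h2, abs_E] at this
  linarith

lemma abs_g_near_int_ge (t : ℝ) (n m : ℤ) (θ : ℝ) (hθ : |θ| ≤ 1/8)
    (h : t * (n:ℝ) = (m:ℝ) + θ) :
    1 - (4*π/3) * |θ| ≤ Complex.abs (g t n) := by
  have h1 : g t (n:ℝ) = (3 + (E θ - 1))/3 := by
    rw [g, E_int, h, E_add, E_int]; ring
  rw [h1, map_div₀, abs_three]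
  have h2 : 3 - 4*π*|θ| ≤ Complex.abs (3 + (E θ - 1)) := by
    have := tri (3:ℂ) (E θ - 1)
    rw [abs_three] at this
    have h4 := abs_E_sub_one_le hθ
    linarith
  linarith

lemma cos_le_of_fd {x : ℝ} (h : 1/40 ≤ fd x) : |Real.cos (π * x)| ≤ Real.cos (π/40) := by
  set n := round x with hn
  set r := x - n with hr
  have h2 : |r| ≤ 1/2 := abs_sub_round x
  have h1 : 1/40 ≤ |r| := h
  have hc : Real.cos (π * x) = (-1)^n * Real.cos (π * r) := by
    have : π * x = π * r + n * π := by rw [hr]; push_cast; ring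
    rw [this, Real.cos_add_int_mul_pi]
  have hsign : |((-1:ℝ))^n| = 1 := by
    rcases Int.even_or_odd n with he | ho
    · rw [he.neg_one_zpow]; norm_num
    · rw [ho.neg_one_zpow]; norm_num
  rw [hc, abs_mul, hsign, one_mul]
  have hcr : |Real.cos (π * r)| = Real.cos (π * |r|) := by
    rw [← Real.cos_abs (π * r), abs_mul, abs_of_pos Real.pi_pos]
    apply abs_of_nonneg
    apply Real.cos_nonneg_of_mem_Icc
    constructor
    · nlinarith [Real.pi_pos, abs_nonneg r]
    · nlinarith [Real.pi_pos]
  rw [hcr]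
  apply Real.cos_le_cos_of_nonneg_of_le_pi
  · positivity
  · nlinarith [Real.pi_pos]
  · nlinarith [Real.pi_pos]

lemma cos_pi_div_forty_lt_one : Real.cos (π/40) < 1 := by
  rcases lt_or_eq_of_le (Real.cos_le_one (π/40)) with h | h
  · exact h
  · exfalso
    obtain ⟨k, hk⟩ := (Real.cos_eq_one_iff _).1 h
    have hπ := Real.pi_ne_zero
    have h80 : ((k:ℝ) * 80) * π = 1 * π := by linear_combination 40 * hk
    have h1 : ((k:ℝ) * 80) = 1 := mul_right_cancel₀ hπ h80
    have : (k * 80 : ℤ) = 1 := by exact_mod_cast h1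
    omega

/-- the contraction factor for bad scales -/
def q : ℝ := (1 + 2 * Real.cos (π/40))/3

lemma q_nonneg : 0 ≤ q := by
  have : 0 ≤ Real.cos (π/40) := by
    apply Real.cos_nonneg_of_mem_Icc
    constructor <;> nlinarith [Real.pi_pos]
  rw [q]; linarith

lemma q_lt_one : q < 1 := by
  have := cos_pi_div_forty_lt_one
  rw [q]; linarith

lemma abs_g_le_q {t u : ℝ} (h : 1/40 ≤ fd u ∨ 1/40 ≤ fd (t*u)) :
    Complex.abs (g t u) ≤ q := by
  rw [g, map_div₀, abs_three, q]
  have main : Complex.abs (1 + E u + E (t*u)) ≤ 1 + 2 * Real.cos (π/40) := by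
    rcases h with h | h
    · calc Complex.abs ((1 + E u) + E (t*u)) ≤
          Complex.abs (1 + E u) + Complex.abs (E (t*u)) := Complex.abs.add_le _ _
        _ ≤ 2 * Real.cos (π/40) + 1 := by
            rw [abs_one_add_E, abs_E]
            have := cos_le_of_fd h
            linarith
        _ = 1 + 2 * Real.cos (π/40) := by ring
    · have hre : 1 + E u + E (t*u) = (1 + E (t*u)) + E u := by ring
      rw [hre]
      calc Complex.abs ((1 + E (t*u)) + E u) ≤
          Complex.abs (1 + E (t*u)) + Complex.abs (E u) := Complex.abs.add_le _ _
        _ ≤ 2 * Real.cos (π/40) + 1 := by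
            rw [abs_one_add_E, abs_E]
            have := cos_le_of_fd h
            linarith
        _ = 1 + 2 * Real.cos (π/40) := by ring
  linarith


lemma continuous_E : Continuous E := by
  unfold E
  fun_prop

lemma one_sub_sum_le_prod {s : Finset ℕ} {f : ℕ → ℝ} (h0 : ∀ i ∈ s, 0 ≤ f i)
    (h1 : ∀ i ∈ s, f i ≤ 1) : 1 - ∑ i ∈ s, f i ≤ ∏ i ∈ s, (1 - f i) := by
  induction s using Finset.cons_induction with
  | empty => simp
  | cons a s ha IH =>
    rw [Finset.sum_cons, Finset.prod_cons]
    have hIH := IH (fun i hi => h0 i (Finset.mem_cons_of_mem hi))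
      (fun i hi => h1 i (Finset.mem_cons_of_mem hi))
    have hfa0 := h0 a (Finset.mem_cons_self a s)
    have hfa1 := h1 a (Finset.mem_cons_self a s)
    have hsum0 : 0 ≤ ∑ i ∈ s, f i :=
      Finset.sum_nonneg (fun i hi => h0 i (Finset.mem_cons_of_mem hi))
    nlinarith

section Meas

variable {μ : Measure ℝ} [IsProbabilityMeasure μ] {t : ℝ}

lemma integrable_E (ν : Measure ℝ) [IsFiniteMeasure ν] (c : ℝ) :
    Integrable (fun x => E (c * x)) ν := by
  have hc : Continuous (fun x => E (c * x)) := continuous_E.comp (continuous_const.mul continuous_id)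
  apply Integrable.mono' (integrable_const (1:ℝ)) hc.aestronglyMeasurable
  filter_upwards with x
  rw [Complex.norm_eq_abs, abs_E]

lemma FT_le_one (ξ : ℝ) : Complex.abs (FT μ ξ) ≤ 1 := by
  rw [FT, ← Complex.norm_eq_abs]
  have := norm_integral_le_of_norm_le_const (μ := μ) (C := 1)
    (f := fun x => E (ξ * x)) ?_
  · simpa using this
  · filter_upwards with x
    rw [Complex.norm_eq_abs, abs_E]

lemma FT_zero : FT μ 0 = 1 := by
  rw [FT]
  simp [E_zero]

lemma FT_abs_neg (ξ : ℝ) : Complex.abs (FT μ (-ξ)) = Complex.abs (FT μ ξ) := by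
  have h1 : FT μ (-ξ) = ∫ x, starRingEnd ℂ (E (ξ * x)) ∂μ := by
    rw [FT]
    congr 1
    funext x
    rw [← E_neg]
    congr 1
    ring
  rw [h1, integral_conj, Complex.abs_conj]; rfl

lemma FE (hμ : muInv t μ) (ξ : ℝ) : FT μ ξ = g t (ξ/10) * FT μ (ξ/10) := by
  have h : μ = (3 : ℝ≥0∞)⁻¹ • (Measure.map (fun x : ℝ => x / 10) μ +
      Measure.map (fun x : ℝ => (x + 1) / 10) μ +
      Measure.map (fun x : ℝ => (x + t) / 10) μ) := hμ
  have hm0 : Measurable (fun x : ℝ => x / 10) := by fun_prop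
  have hm1 : Measurable (fun x : ℝ => (x + 1) / 10) := by fun_prop
  have hm2 : Measurable (fun x : ℝ => (x + t) / 10) := by fun_prop
  haveI i0 : IsProbabilityMeasure (Measure.map (fun x : ℝ => x / 10) μ) :=
    Measure.isProbabilityMeasure_map hm0.aemeasurable
  haveI i1 : IsProbabilityMeasure (Measure.map (fun x : ℝ => (x + 1) / 10) μ) :=
    Measure.isProbabilityMeasure_map hm1.aemeasurable
  haveI i2 : IsProbabilityMeasure (Measure.map (fun x : ℝ => (x + t) / 10) μ) :=
    Measure.isProbabilityMeasure_map hm2.aemeasurable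
  have hcont : Continuous (fun x => E (ξ * x)) :=
    continuous_E.comp (continuous_const.mul continuous_id)
  have hint : ∀ (ν : Measure ℝ), IsFiniteMeasure ν → Integrable (fun x => E (ξ * x)) ν :=
    fun ν hν => integrable_E ν ξ
  rw [FT]
  conv_lhs => rw [h]
  rw [integral_smul_measure]
  rw [integral_add_measure (by
      rw [integrable_add_measure]
      exact ⟨hint _ inferInstance, hint _ inferInstance⟩) (hint _ inferInstance)]
  rw [integral_add_measure (hint _ inferInstance) (hint _ inferInstance)]
  rw [integral_map hm0.aemeasurable hcont.aestronglyMeasurable,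
      integral_map hm1.aemeasurable hcont.aestronglyMeasurable,
      integral_map hm2.aemeasurable hcont.aestronglyMeasurable]
  have e0 : ∀ x : ℝ, E (ξ * (x / 10)) = E ((ξ/10) * x) := by
    intro x; congr 1; ring
  have e1 : ∀ x : ℝ, E (ξ * ((x + 1) / 10)) = E (ξ/10) * E ((ξ/10) * x) := by
    intro x; rw [← E_add]; congr 1; ring
  have e2 : ∀ x : ℝ, E (ξ * ((x + t) / 10)) = E (t * (ξ/10)) * E ((ξ/10) * x) := by
    intro x; rw [← E_add]; congr 1; ring
  simp only [e1, e2]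
  simp only [e0]
  rw [integral_const_mul, integral_const_mul]
  have htr : ((3 : ℝ≥0∞)⁻¹).toReal = (3:ℝ)⁻¹ := by
    simp
  rw [htr, ← FT]
  rw [Complex.real_smul]
  rw [g]
  push_cast
  ring

lemma FE_pow (hμ : muInv t μ) (K : ℕ) (η : ℝ) :
    FT μ ((10:ℝ)^K * η) = FT μ η * ∏ k ∈ Finset.range K, g t ((10:ℝ)^k * η) := by
  induction K generalizing η with
  | zero => simp
  | succ K IH =>
    have h1 : (10:ℝ)^(K+1) * η = (10:ℝ)^K * (10 * η) := by ring
    rw [h1, IH (10 * η)]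
    have h2 : FT μ (10 * η) = g t η * FT μ η := by
      have := FE hμ (10 * η)
      simpa using this
    rw [h2]
    rw [Finset.prod_range_succ']
    have h3 : ∀ k : ℕ, (10:ℝ)^k * (10 * η) = (10:ℝ)^(k+1) * η := by
      intro k; ring
    simp only [h3]
    simp only [pow_zero, one_mul]
    ring

lemma FT_tendsto_one (η : ℝ) :
    Tendsto (fun K : ℕ => FT μ (η / 10^K)) atTop (nhds 1) := by
  have h1 : (1:ℂ) = ∫ _x, (1:ℂ) ∂μ := by simp
  rw [h1]
  apply tendsto_integral_of_dominated_convergence (bound := fun _ => (1:ℝ))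
  · intro n
    exact (continuous_E.comp (continuous_const.mul continuous_id)).aestronglyMeasurable
  · exact integrable_const 1
  · intro n
    filter_upwards with x
    rw [Complex.norm_eq_abs, abs_E]
  · filter_upwards with x
    have harg : Tendsto (fun K : ℕ => (η / 10^K) * x) atTop (nhds 0) := by
      have h2 : Tendsto (fun K : ℕ => (1/10:ℝ)^K) atTop (nhds 0) := by
        apply tendsto_pow_atTop_nhds_zero_of_lt_one <;> norm_num
      have h3 : Tendsto (fun K : ℕ => η * (1/10:ℝ)^K * x) atTop (nhds (η * 0 * x)) :=
        (h2.const_mul η).mul_const x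
      simp only [mul_zero, zero_mul] at h3
      convert h3 using 2 with K
      rw [one_div_pow, mul_one_div]
    have := (continuous_E.tendsto 0).comp harg
    rwa [E_zero] at this

lemma F1 (hμ : muInv t μ) (ht : t ∈ Icc (0:ℝ) 1) : 1/20 ≤ Complex.abs (FT μ 1) := by
  obtain ⟨K, hK⟩ := (Metric.tendsto_atTop.1 (FT_tendsto_one (μ := μ) 1) (1/100) (by norm_num))
  have hKK := hK K le_rfl
  rw [Complex.dist_eq, Complex.norm_eq_abs] at hKK
  have hpow : (10:ℝ)^K * (1 / 10^K) = 1 := by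
    field_simp
  have hFE := FE_pow hμ K (1 / 10^K)
  rw [hpow] at hFE
  have hsmall : (99/100:ℝ) ≤ Complex.abs (FT μ (1/10^K)) := by
    have t1 := tri (1:ℂ) (FT μ (1/10^K) - 1)
    rw [map_one] at t1
    have e : (1:ℂ) + (FT μ (1/10^K) - 1) = FT μ (1/10^K) := by ring
    rw [e] at t1
    linarith
  have hprod : (1 - 8*π/27 : ℝ) ≤
      Complex.abs (∏ k ∈ Finset.range K, g t ((10:ℝ)^k * (1/10^K))) := by
    rw [← Complex.norm_eq_abs, norm_prod]
    have hratio : ∀ k, k < K → (10:ℝ)^k/10^K ≤ 1/10 := by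
      intro k hk
      have h10 : (10:ℝ)^k * 10 ≤ 10^K := by
        calc (10:ℝ)^k * 10 = 10^(k+1) := by ring
          _ ≤ 10^K := by apply pow_le_pow_right₀ (by norm_num) (by omega)
      rw [div_le_div_iff₀ (by positivity) (by norm_num)]
      linarith
    have hfac : ∀ k ∈ Finset.range K,
        1 - (8*π/3) * ((10:ℝ)^k / 10^K) ≤ ‖g t ((10:ℝ)^k * (1/10^K))‖ := by
      intro k hk
      have hk' : k < K := Finset.mem_range.1 hk
      have habs : |(10:ℝ)^k * (1/10^K)| = 10^k/10^K := by
        rw [abs_of_pos (by positivity), mul_one_div]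
      have hu : |(10:ℝ)^k * (1/10^K)| ≤ 1/8 := by
        rw [habs]
        linarith [hratio k hk']
      have hg := abs_g_sub_one ht hu
      rw [habs] at hg
      have t1 := tri (1:ℂ) (g t ((10:ℝ)^k * (1/10^K)) - 1)
      rw [map_one] at t1
      have e : (1:ℂ) + (g t ((10:ℝ)^k * (1/10^K)) - 1) = g t ((10:ℝ)^k * (1/10^K)) := by ring
      rw [e] at t1
      rw [Complex.norm_eq_abs]
      linarith
    have hterm01 : ∀ k ∈ Finset.range K, 0 ≤ (8*π/3) * ((10:ℝ)^k / 10^K) ∧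
        (8*π/3) * ((10:ℝ)^k / 10^K) ≤ 1 := by
      intro k hk
      have hk' : k < K := Finset.mem_range.1 hk
      have h1 := hratio k hk'
      have h2 : (0:ℝ) ≤ (10:ℝ)^k/10^K := by positivity
      constructor
      · positivity
      · nlinarith [Real.pi_lt_d2, Real.pi_pos]
    have hsum : ∑ k ∈ Finset.range K, (8*π/3) * ((10:ℝ)^k/10^K) ≤ 8*π/27 := by
      have h1 : ∑ k ∈ Finset.range K, (8*π/3) * ((10:ℝ)^k/10^K)
          = (8*π/3) * (((10:ℝ)^K - 1)/(10 - 1))/10^K := by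
        rw [← Finset.mul_sum, ← Finset.sum_div, geom_sum_eq (by norm_num : (10:ℝ) ≠ 1)]
        ring
      rw [h1]
      rw [div_le_iff₀ (by positivity : (0:ℝ) < 10^K)]
      have : (0:ℝ) < 10^K := by positivity
      nlinarith [Real.pi_pos]
    calc (1 - 8*π/27 : ℝ)
        ≤ 1 - ∑ k ∈ Finset.range K, (8*π/3) * ((10:ℝ)^k / 10^K) := by linarith
      _ ≤ ∏ k ∈ Finset.range K, (1 - (8*π/3) * ((10:ℝ)^k / 10^K)) :=
          one_sub_sum_le_prod (fun k hk => (hterm01 k hk).1) (fun k hk => (hterm01 k hk).2)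
      _ ≤ ∏ k ∈ Finset.range K, ‖g t ((10:ℝ)^k * (1/10^K))‖ := by
          apply Finset.prod_le_prod
          · intro k hk
            linarith [(hterm01 k hk).2]
          · exact hfac
  rw [hFE, map_mul]
  calc (1/20:ℝ) ≤ (99/100) * (1 - 8*π/27) := by nlinarith [Real.pi_lt_d2, Real.pi_gt_three]
    _ ≤ Complex.abs (FT μ (1/10^K)) *
        Complex.abs (∏ k ∈ Finset.range K, g t ((10:ℝ)^k * (1/10^K))) := by
        apply mul_le_mul hsmall hprod (by nlinarith [Real.pi_lt_d2]) (by positivity)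

lemma FT_lower (hμ : muInv t μ) (ht : t ∈ Icc (0:ℝ) 1) (s m : ℕ) (p : ℤ) (hsm : s ≤ m)
    (hδ : |t - (p:ℝ)/10^s| ≤ 1/(100 * 10^m)) :
    (1/25:ℝ) * (1/3)^s ≤ Complex.abs (FT μ ((10:ℝ)^m)) := by
  set δ := t - (p:ℝ)/10^s with hδdef
  have hFE := FE_pow hμ m 1
  simp only [mul_one] at hFE
  have hsplit : (∏ k ∈ Finset.range s, g t ((10:ℝ)^k)) * ∏ k ∈ Finset.Ico s m, g t ((10:ℝ)^k)
      = ∏ k ∈ Finset.range m, g t ((10:ℝ)^k) := Finset.prod_range_mul_prod_Ico _ hsm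
  have hA : ((1:ℝ)/3)^s ≤ Complex.abs (∏ k ∈ Finset.range s, g t ((10:ℝ)^k)) := by
    rw [← Complex.norm_eq_abs, norm_prod]
    calc ((1:ℝ)/3)^s = ∏ _k ∈ Finset.range s, (1/3:ℝ) := by
          rw [Finset.prod_const, Finset.card_range]
      _ ≤ ∏ k ∈ Finset.range s, ‖g t ((10:ℝ)^k)‖ := by
          apply Finset.prod_le_prod (by intros; norm_num)
          intro k _
          have h := abs_g_int_ge t (10^k)
          push_cast at h
          rw [Complex.norm_eq_abs]
          exact h
  have hB : (99/100:ℝ) ≤ Complex.abs (∏ k ∈ Finset.Ico s m, g t ((10:ℝ)^k)) := by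
    rw [← Complex.norm_eq_abs, norm_prod]
    have hδsmall : |δ| ≤ 1/(100 * 10^m) := hδ
    have hterm : ∀ k, k < m → |δ * 10^k| ≤ (10:ℝ)^k/(100 * 10^m) := by
      intro k hk
      rw [abs_mul, abs_of_pos (by positivity : (0:ℝ) < (10:ℝ)^k)]
      calc |δ| * (10:ℝ)^k ≤ (1/(100 * 10^m)) * 10^k := by
            apply mul_le_mul_of_nonneg_right hδsmall (by positivity)
        _ = (10:ℝ)^k/(100 * 10^m) := by ring
    have hterm2 : ∀ k, k < m → (10:ℝ)^k/(100 * 10^m) ≤ 1/1000 := by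
      intro k hk
      have h10 : (10:ℝ)^k * 10 ≤ 10^m := by
        calc (10:ℝ)^k * 10 = 10^(k+1) := by ring
          _ ≤ 10^m := by apply pow_le_pow_right₀ (by norm_num) (by omega)
      rw [div_le_div_iff₀ (by positivity) (by norm_num)]
      nlinarith [pow_pos (show (0:ℝ) < 10 by norm_num) m]
    have hfac : ∀ k ∈ Finset.Ico s m,
        1 - (4*π/3) * ((10:ℝ)^k/(100 * 10^m)) ≤ ‖g t ((10:ℝ)^k)‖ := by
      intro k hk
      obtain ⟨hks, hkm⟩ := Finset.mem_Ico.1 hk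
      have hks10 : (10:ℝ)^(k-s) * 10^s = 10^k := by
        rw [← pow_add]; congr 1; omega
      have h10s : ((10:ℝ)^s) ≠ 0 := by positivity
      have key : t * (((10:ℤ)^k : ℤ):ℝ) = (((p * 10^(k-s) : ℤ)):ℝ) + δ * 10^k := by
        push_cast
        have h2 : (p:ℝ) * 10^(k-s) = (p:ℝ)/10^s * 10^k := by
          rw [div_mul_eq_mul_div, eq_div_iff h10s, mul_assoc, hks10]
        rw [h2, hδdef]
        ring
      have hθ : |δ * 10^k| ≤ 1/8 := le_trans (hterm k hkm) (le_trans (hterm2 k hkm) (by norm_num))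
      have h := abs_g_near_int_ge t ((10:ℤ)^k) (p * 10^(k-s)) (δ * 10^k) hθ key
      push_cast at h
      rw [Complex.norm_eq_abs]
      have hmono : (4*π/3) * |δ * 10^k| ≤ (4*π/3) * ((10:ℝ)^k/(100 * 10^m)) := by
        apply mul_le_mul_of_nonneg_left (hterm k hkm) (by positivity)
      linarith
    have hc01 : ∀ k ∈ Finset.Ico s m, 0 ≤ (4*π/3) * ((10:ℝ)^k/(100 * 10^m)) ∧
        (4*π/3) * ((10:ℝ)^k/(100 * 10^m)) ≤ 1 := by
      intro k hk
      obtain ⟨_, hkm⟩ := Finset.mem_Ico.1 hk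
      have h2 := hterm2 k hkm
      constructor
      · positivity
      · nlinarith [Real.pi_lt_d2, Real.pi_pos, (show (0:ℝ) ≤ (10:ℝ)^k/(100*10^m) by positivity)]
    have hsum : ∑ k ∈ Finset.Ico s m, (4*π/3) * ((10:ℝ)^k/(100 * 10^m)) ≤ 1/100 := by
      have hsub : ∑ k ∈ Finset.Ico s m, (4*π/3) * ((10:ℝ)^k/(100 * 10^m))
          ≤ ∑ k ∈ Finset.range m, (4*π/3) * ((10:ℝ)^k/(100 * 10^m)) := by
        apply Finset.sum_le_sum_of_subset_of_nonneg
        · intro k hk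
          exact Finset.mem_range.2 (Finset.mem_Ico.1 hk).2
        · intro k _ _
          positivity
      have heq : ∑ k ∈ Finset.range m, (4*π/3) * ((10:ℝ)^k/(100 * 10^m))
          = (4*π/3) * (((10:ℝ)^m - 1)/(10 - 1))/(100 * 10^m) := by
        rw [← Finset.mul_sum, ← Finset.sum_div, geom_sum_eq (by norm_num : (10:ℝ) ≠ 1)]
        ring
      have hfin : (4*π/3) * (((10:ℝ)^m - 1)/(10 - 1))/(100 * 10^m) ≤ 1/100 := by
        rw [div_le_div_iff₀ (by positivity) (by norm_num)]
        have hp : (0:ℝ) < 10^m := by positivity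
        nlinarith [Real.pi_lt_d2, Real.pi_pos]
      linarith
    calc (99/100:ℝ) ≤ 1 - ∑ k ∈ Finset.Ico s m, (4*π/3) * ((10:ℝ)^k/(100 * 10^m)) := by
          linarith
      _ ≤ ∏ k ∈ Finset.Ico s m, (1 - (4*π/3) * ((10:ℝ)^k/(100 * 10^m))) :=
          one_sub_sum_le_prod (fun k hk => (hc01 k hk).1) (fun k hk => (hc01 k hk).2)
      _ ≤ ∏ k ∈ Finset.Ico s m, ‖g t ((10:ℝ)^k)‖ := by
          apply Finset.prod_le_prod
          · intro k hk
            linarith [(hc01 k hk).2]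
          · exact hfac
  have h20 := F1 hμ ht
  rw [hFE, map_mul, ← hsplit, map_mul]
  calc (1/25:ℝ) * (1/3)^s ≤ (1/20) * ((1/3)^s * (99/100)) := by
        nlinarith [pow_pos (show (0:ℝ) < 1/3 by norm_num) s]
    _ ≤ Complex.abs (FT μ 1) * (Complex.abs (∏ k ∈ Finset.range s, g t ((10:ℝ)^k)) *
        Complex.abs (∏ k ∈ Finset.Ico s m, g t ((10:ℝ)^k))) := by
        apply mul_le_mul h20 _ _ (Complex.abs.nonneg _)
        · apply mul_le_mul hA hB (by norm_num) (Complex.abs.nonneg _)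
        · positivity

end Meas

lemma abs_sub' (a b : ℝ) : |a - b| ≤ |a| + |b| := by
  rw [sub_eq_add_neg]
  exact (abs_add_le _ _).trans (by rw [abs_neg])

lemma round_min (x : ℝ) (n : ℤ) : |x - round x| ≤ |x - n| := by
  by_cases h : 1/2 ≤ |x - n|
  · exact le_trans (abs_sub_round x) h
  · push_neg at h
    have hr : round x = n := by
      rw [round_eq, Int.floor_eq_iff]
      rw [abs_lt] at h
      constructor
      · linarith
      · push_cast; linarith
    rw [hr]

lemma step10 {x y : ℝ} (hxy : y = 10 * x) (hx : fd x < 1/40) (hy : fd y < 1/40) :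
    y - round y = 10 * (x - round x) := by
  have e : ((round y : ℝ) - 10 * round x) = 10*(x - round x) - (y - round y) := by
    rw [hxy]; ring
  have habs : |((round y : ℝ) - 10 * round x)| < 1 := by
    rw [e]
    calc |10*(x - round x) - (y - round y)| ≤ |10*(x - round x)| + |y - round y| := abs_sub' _ _
      _ = 10 * fd x + fd y := by rw [abs_mul, fd, fd]; norm_num
      _ < 1 := by
          simp only [fd] at hx hy ⊢
          linarith [abs_nonneg (x - round x), abs_nonneg (y - round y)]
  have hz : round y - 10 * round x = 0 := by
    have h1 : |round y - 10 * round x| < 1 := by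
      have : ((|round y - 10 * round x| : ℤ) : ℝ) < 1 := by
        rw [Int.cast_abs]
        push_cast
        push_cast at habs
        convert habs using 2
      exact_mod_cast this
    rw [abs_lt] at h1
    omega
  have hz' : (round y : ℝ) = 10 * round x := by
    have : ((round y - 10 * round x : ℤ) : ℝ) = 0 := by rw [hz]; norm_num
    push_cast at this
    linarith
  rw [hz', hxy]
  ring

lemma chain_lemma {w : ℕ → ℝ} (hw : ∀ k, w (k+1) = 10 * w k) {a b : ℕ} (hab : a ≤ b)
    (hg : ∀ k, a ≤ k → k ≤ b → fd (w k) < 1/40) :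
    w a - round (w a) = (1/10:ℝ)^(b-a) * (w b - round (w b)) := by
  induction b, hab using Nat.le_induction with
  | base => simp
  | succ b hab IH =>
    have hIH := IH (fun k h1 h2 => hg k h1 (by omega))
    have hstep := step10 (hw b) (hg b hab (by omega)) (hg (b+1) (by omega) (by omega))
    have hsub : b + 1 - a = (b - a) + 1 := by omega
    rw [hsub, pow_succ, hIH]
    rw [show w b - (round (w b) : ℝ) = (1/10) * (w (b+1) - round (w (b+1))) by
      rw [hstep]; ring]
    ring

lemma run_lemma (t η : ℝ) (ht : t ∈ Icc (0:ℝ) 1) (hη1 : 1 ≤ η) (hη10 : η < 10)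
    (a b : ℕ) (hab : a ≤ b)
    (hgood : ∀ k, a ≤ k → k ≤ b →
      fd ((10:ℝ)^k * η) < 1/40 ∧ fd (t * ((10:ℝ)^k * η)) < 1/40) :
    ∃ n : ℕ, 1 ≤ n ∧ (n:ℝ) ≤ 10^(a+2) ∧ fd (t * n) ≤ (1/10:ℝ)^(b-a) / 10 := by
  set w1 : ℕ → ℝ := fun k => (10:ℝ)^k * η with hw1def
  set w2 : ℕ → ℝ := fun k => t * ((10:ℝ)^k * η) with hw2def
  have hw1 : ∀ k, w1 (k+1) = 10 * w1 k := by
    intro k; simp only [hw1def]; ring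
  have hw2 : ∀ k, w2 (k+1) = 10 * w2 k := by
    intro k; simp only [hw2def]; ring
  have h1 := chain_lemma hw1 hab (fun k hk1 hk2 => (hgood k hk1 hk2).1)
  have h2 := chain_lemma hw2 hab (fun k hk1 hk2 => (hgood k hk1 hk2).2)
  set L := b - a with hLdef
  have hpowpos : (0:ℝ) < (1/10:ℝ)^L := by positivity
  have hpowle : (1/10:ℝ)^L ≤ 1 := pow_le_one₀ (by norm_num) (by norm_num)
  have hδ : |w1 a - round (w1 a)| ≤ (1/10:ℝ)^L * (1/40) := by
    rw [h1, abs_mul, abs_pow]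
    have : |(1/10:ℝ)| = 1/10 := by norm_num
    rw [this]
    apply mul_le_mul_of_nonneg_left _ (by positivity)
    exact le_of_lt (hgood b hab le_rfl).1
  have hγ : |w2 a - round (w2 a)| ≤ (1/10:ℝ)^L * (1/40) := by
    rw [h2, abs_mul, abs_pow]
    have : |(1/10:ℝ)| = 1/10 := by norm_num
    rw [this]
    apply mul_le_mul_of_nonneg_left _ (by positivity)
    exact le_of_lt (hgood b hab le_rfl).2
  set N := round (w1 a) with hNdef
  have hwa1 : 1 ≤ w1 a := by
    have h10a : (1:ℝ) ≤ 10^a := one_le_pow₀ (by norm_num)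
    calc (1:ℝ) = 1 * 1 := by norm_num
      _ ≤ 10^a * η := by apply mul_le_mul h10a hη1 (by norm_num) (by positivity)
  have hδ40 : |w1 a - (N:ℝ)| ≤ 1/40 := by
    calc |w1 a - (N:ℝ)| ≤ (1/10:ℝ)^L * (1/40) := hδ
      _ ≤ 1 * (1/40) := by apply mul_le_mul_of_nonneg_right hpowle (by norm_num)
      _ = 1/40 := by norm_num
  have hNpos : 1 ≤ N := by
    have h0 : (0:ℝ) < (N:ℝ) := by
      have := abs_le.1 hδ40
      linarith [this.2]
    exact_mod_cast h0
  have hNle : (N:ℝ) ≤ 10^(a+2) := by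
    have hp : (0:ℝ) < 10^a := by positivity
    have hub : w1 a < 10^a * 10 := by
      simp only [hw1def]
      exact mul_lt_mul_of_pos_left hη10 hp
    have h2a : (10:ℝ)^(a+2) = 10^a * 100 := by rw [pow_add]; norm_num
    have := abs_le.1 hδ40
    rw [h2a]
    nlinarith [this.1]
  have hcast : ((N.toNat : ℕ) : ℝ) = (N : ℝ) := by
    exact_mod_cast Int.toNat_of_nonneg (show (0:ℤ) ≤ N by omega)
  refine ⟨N.toNat, ?_, ?_, ?_⟩
  · omega
  · rw [hcast]; exact hNle
  · rw [hcast]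
    have key : |t * (N:ℝ) - round (w2 a)| ≤ (1/10:ℝ)^L/20 := by
      have e : t * (N:ℝ) - round (w2 a) =
          (w2 a - round (w2 a)) - t * (w1 a - (N:ℝ)) := by
        simp only [hw2def, hw1def]
        ring
      rw [e]
      calc |(w2 a - round (w2 a)) - t * (w1 a - (N:ℝ))|
          ≤ |w2 a - round (w2 a)| + |t * (w1 a - (N:ℝ))| := abs_sub' _ _
        _ ≤ (1/10:ℝ)^L * (1/40) + 1 * ((1/10:ℝ)^L * (1/40)) := by
            apply add_le_add hγ
            rw [abs_mul]
            apply mul_le_mul _ hδ (abs_nonneg _) (by norm_num)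
            rw [abs_of_nonneg ht.1]; exact ht.2
        _ = (1/10:ℝ)^L/20 := by ring
    calc fd (t * (N:ℝ)) ≤ |t * (N:ℝ) - round (w2 a)| := round_min _ _
      _ ≤ (1/10:ℝ)^L/20 := key
      _ ≤ (1/10:ℝ)^L/10 := by linarith

lemma exists_Lam {t : ℝ} (hirr : Irrational t) (M : ℕ) :
    ∃ L : ℕ, ∀ n : ℕ, 1 ≤ n → n ≤ M → (1/10:ℝ)^L < fd (t*n) := by
  induction M with
  | zero => exact ⟨0, fun n h1 h2 => by omega⟩
  | succ M IH =>
    obtain ⟨L, hL⟩ := IH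
    have hpos : 0 < fd (t * (M+1:ℕ)) := by
      rw [fd, abs_pos, sub_ne_zero]
      intro heq
      apply hirr
      refine ⟨(round (t * ((M:ℚ)+1)) : ℚ) / ((M:ℚ)+1), ?_⟩
      push_cast
      rw [div_eq_iff (by positivity : ((M:ℝ)+1) ≠ 0)]
      push_cast at heq
      rw [heq]
      norm_num
    obtain ⟨L', hL'⟩ := exists_pow_lt_of_lt_one hpos (by norm_num : (1/10:ℝ) < 1)
    refine ⟨max L L', fun n h1 h2 => ?_⟩
    rcases Nat.lt_or_ge n (M+1) with h | h
    · calc (1/10:ℝ)^(max L L') ≤ (1/10)^L :=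
          pow_le_pow_of_le_one (by norm_num) (by norm_num) (le_max_left _ _)
        _ < fd (t*n) := hL n h1 (by omega)
    · have hn : n = M + 1 := by omega
      subst hn
      calc (1/10:ℝ)^(max L L') ≤ (1/10)^L' :=
          pow_le_pow_of_le_one (by norm_num) (by norm_num) (le_max_right _ _)
        _ < fd (t*(M+1:ℕ)) := hL'

lemma exists_pow10 {x : ℝ} (hx : 1 ≤ x) : ∃ K : ℕ, (10:ℝ)^K ≤ x ∧ x < (10:ℝ)^(K+1) := by
  set n := ⌊x⌋₊ with hn
  have hn1 : 1 ≤ n := Nat.le_floor (by exact_mod_cast hx)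
  refine ⟨Nat.log 10 n, ?_, ?_⟩
  · calc (10:ℝ)^(Nat.log 10 n) = ((10^(Nat.log 10 n) : ℕ) : ℝ) := by push_cast; ring
      _ ≤ (n:ℝ) := by exact_mod_cast Nat.pow_log_le_self 10 (by omega)
      _ ≤ x := Nat.floor_le (by linarith)
  · have h1 : n < 10^(Nat.log 10 n + 1) := Nat.lt_pow_succ_log_self (by norm_num) n
    have h2 : (n:ℝ) + 1 ≤ ((10^(Nat.log 10 n + 1) : ℕ) : ℝ) := by
      exact_mod_cast h1
    calc x < n + 1 := Nat.lt_floor_add_one x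
      _ ≤ ((10^(Nat.log 10 n + 1) : ℕ) : ℝ) := h2
      _ = (10:ℝ)^(Nat.log 10 n + 1) := by push_cast; ring

lemma EK_main {t : ℝ} (hirr : Irrational t) (ht : t ∈ Icc (0:ℝ) 1) {ε : ℝ} (hε : 0 < ε) :
    ∃ K₀ : ℕ, ∀ (K : ℕ) (η : ℝ), 1 ≤ η → η < 10 →
      ε ≤ ∏ k ∈ Finset.range K, Complex.abs (g t ((10:ℝ)^k * η)) → K ≤ K₀ := by
  classical
  obtain ⟨Nc, hNc⟩ := exists_pow_lt_of_lt_one hε q_lt_one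
  choose Λ hΛ using fun M => exists_Lam hirr M
  let Mf : ℕ → ℕ := fun j => Nat.rec (Λ 100 + 1) (fun _ M => M + Λ (10^(M+3)) + 2) j
  have hMfs : ∀ j, Mf (j+1) = Mf j + Λ (10^(Mf j + 3)) + 2 := fun j => rfl
  have hMf0 : Mf 0 = Λ 100 + 1 := rfl
  have hMfmono : Monotone Mf := monotone_nat_of_le_succ (fun j => by rw [hMfs]; omega)
  refine ⟨Mf Nc, ?_⟩
  intro K η hη1 hη10 hprod
  set Good : ℕ → Prop := fun k => fd ((10:ℝ)^k * η) < 1/40 ∧ fd (t * ((10:ℝ)^k * η)) < 1/40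
    with hGoodDef
  set B : Finset ℕ := (Finset.range K).filter (fun k => ¬ Good k) with hBdef
  have hcard : B.card < Nc := by
    by_contra hge
    push_neg at hge
    have h1 : ∏ k ∈ Finset.range K, Complex.abs (g t ((10:ℝ)^k * η)) ≤ q ^ B.card := by
      have hsplit := Finset.prod_filter_mul_prod_filter_not (Finset.range K)
        (fun k => ¬ Good k) (fun k => Complex.abs (g t ((10:ℝ)^k * η)))
      have hB : ∏ k ∈ B, Complex.abs (g t ((10:ℝ)^k * η)) ≤ q ^ B.card := by
        rw [← Finset.prod_const]
        apply Finset.prod_le_prod (fun k _ => Complex.abs.nonneg _)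
        intro k hk
        rw [hBdef, Finset.mem_filter] at hk
        apply abs_g_le_q
        rcases not_and_or.1 hk.2 with h | h
        · left; linarith [not_lt.1 h]
        · right; linarith [not_lt.1 h]
      have hG : ∏ k ∈ (Finset.range K).filter (fun k => ¬¬ Good k),
          Complex.abs (g t ((10:ℝ)^k * η)) ≤ 1 :=
        Finset.prod_le_one (fun k _ => Complex.abs.nonneg _) (fun k _ => abs_g_le_one _ _)
      calc ∏ k ∈ Finset.range K, Complex.abs (g t ((10:ℝ)^k * η))
          = (∏ k ∈ B, Complex.abs (g t ((10:ℝ)^k * η))) *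
            ∏ k ∈ (Finset.range K).filter (fun k => ¬¬ Good k),
              Complex.abs (g t ((10:ℝ)^k * η)) := by rw [hBdef]; exact hsplit.symm
        _ ≤ q ^ B.card * 1 := by
            apply mul_le_mul hB hG
              (Finset.prod_nonneg (fun k _ => Complex.abs.nonneg _))
              (pow_nonneg q_nonneg _)
        _ = q ^ B.card := by ring
    have h2 : q ^ B.card ≤ q ^ Nc := pow_le_pow_of_le_one q_nonneg q_lt_one.le hge
    linarith
  have main : ∀ k, k ≤ K → k ≤ Mf ((B.filter (fun j => j < k)).card) := by
    intro k
    induction k using Nat.strong_induction_on with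
    | _ k IH =>
    intro hkK
    rcases Nat.eq_zero_or_pos k with rfl | hk0
    · exact Nat.zero_le _
    by_cases hall : ∀ j, j < k → Good j
    · obtain ⟨n, hn1, hn100, hfd⟩ := run_lemma t η ht hη1 hη10 0 (k-1) (by omega)
        (fun j hj1 hj2 => hall j (by omega))
      have hn100' : n ≤ 100 := by
        have h2 : (10:ℝ)^(0+2) = ((100:ℕ):ℝ) := by norm_num
        exact_mod_cast hn100.trans_eq h2
      have hΛ1 := hΛ 100 n hn1 hn100'
      have hlt : (1/10:ℝ)^(Λ 100) < (1/10:ℝ)^(k-1) := by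
        calc (1/10:ℝ)^(Λ 100) < fd (t*n) := hΛ1
          _ ≤ (1/10:ℝ)^(k-1-0)/10 := hfd
          _ ≤ (1/10:ℝ)^(k-1) := by
              rw [Nat.sub_zero]
              have h3 : (0:ℝ) < (1/10:ℝ)^(k-1) := by positivity
              linarith
      have hk1 : k - 1 < Λ 100 := by
        by_contra hcon
        push_neg at hcon
        have := pow_le_pow_of_le_one (by norm_num : (0:ℝ) ≤ 1/10) (by norm_num) hcon
        linarith
      calc k ≤ Λ 100 + 1 := by omega
        _ = Mf 0 := hMf0.symm
        _ ≤ Mf _ := hMfmono (Nat.zero_le _)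
    · push_neg at hall
      obtain ⟨j₀, hj₀k, hj₀⟩ := hall
      have hspec : ¬ Good (Nat.findGreatest (fun j => ¬ Good j) (k-1)) :=
        Nat.findGreatest_spec (P := fun j => ¬ Good j) (n := k-1) (m := j₀) (by omega) hj₀
      set w := Nat.findGreatest (fun j => ¬ Good j) (k-1) with hwdef
      have hw : ¬ Good w := hspec
      have hwk : w ≤ k - 1 := Nat.findGreatest_le _
      have habove : ∀ j, w < j → j ≤ k-1 → Good j := by
        intro j hj1 hj2
        by_contra hbad
        exact Nat.findGreatest_is_greatest (show w < j from hj1) hj2 hbad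
      have hwB : w ∈ B := by
        rw [hBdef, Finset.mem_filter, Finset.mem_range]
        exact ⟨by omega, hw⟩
      have hIHw := IH w (by omega) (by omega)
      set cw := (B.filter (fun j => j < w)).card with hcwdef
      set ck := (B.filter (fun j => j < k)).card with hckdef
      have hsubset : insert w (B.filter (fun j => j < w)) ⊆ B.filter (fun j => j < k) := by
        intro x hx
        rcases Finset.mem_insert.1 hx with rfl | hx
        · rw [Finset.mem_filter]; exact ⟨hwB, by omega⟩
        · rw [Finset.mem_filter] at hx ⊢
          exact ⟨hx.1, by omega⟩
      have hcwck : cw + 1 ≤ ck := by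
        have h1 : (insert w (B.filter (fun j => j < w))).card = cw + 1 := by
          rw [Finset.card_insert_of_notMem]
          intro hmem
          rw [Finset.mem_filter] at hmem
          omega
        calc cw + 1 = _ := h1.symm
          _ ≤ ck := Finset.card_le_card hsubset
      have hck1 : 1 ≤ ck := by omega
      set M' := Mf (ck - 1) with hM'def
      have hwM' : w ≤ M' := le_trans hIHw (hMfmono (by omega))
      rcases Nat.lt_or_ge w (k-1) with hwlt | hwge
      · obtain ⟨n, hn1, hnle, hfd⟩ := run_lemma t η ht hη1 hη10 (w+1) (k-1) (by omega)
          (fun j hj1 hj2 => habove j (by omega) hj2)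
        have hnleM : n ≤ 10^(M'+3) := by
          have h1 : (n:ℝ) ≤ (10:ℝ)^(w+3) := hnle.trans (by
            apply pow_le_pow_right₀ (by norm_num) (by omega))
          have h3 : n ≤ 10^(w+3) := by
            have h2 : ((10^(w+3):ℕ):ℝ) = (10:ℝ)^(w+3) := by push_cast; ring
            exact_mod_cast h1.trans_eq h2.symm
          exact h3.trans (Nat.pow_le_pow_right (by norm_num) (by omega))
        have hΛ2 := hΛ (10^(M'+3)) n hn1 hnleM
        set L := (k-1) - (w+1) with hLdef
        have hlt : (1/10:ℝ)^(Λ (10^(M'+3))) < (1/10:ℝ)^(L+1) := by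
          calc (1/10:ℝ)^(Λ (10^(M'+3))) < fd (t*n) := hΛ2
            _ ≤ (1/10:ℝ)^L / 10 := hfd
            _ = (1/10:ℝ)^(L+1) := by rw [pow_succ]; ring
        have hLΛ : L + 1 < Λ (10^(M'+3)) := by
          by_contra hcon
          push_neg at hcon
          have := pow_le_pow_of_le_one (by norm_num : (0:ℝ) ≤ 1/10) (by norm_num) hcon
          linarith
        have hMfck : Mf ck = M' + Λ (10^(M'+3)) + 2 := by
          have h1 : ck = (ck - 1) + 1 := by omega
          rw [h1, hMfs, ← hM'def]
        have hkeq : k = w + L + 2 := by omega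
        omega
      · have hweq : w = k - 1 := by omega
        have hMfck : Mf ck = M' + Λ (10^(M'+3)) + 2 := by
          have h1 : ck = (ck - 1) + 1 := by omega
          rw [h1, hMfs, ← hM'def]
        omega
  have hfin := main K le_rfl
  have hBK : B.filter (fun j => j < K) = B := by
    apply Finset.filter_true_of_mem
    intro x hx
    rw [hBdef, Finset.mem_filter, Finset.mem_range] at hx
    exact hx.1
  rw [hBK] at hfin
  exact hfin.trans (hMfmono (by omega))

section Meas2

variable {μ : Measure ℝ} [IsProbabilityMeasure μ] {t : ℝ}

lemma rajchman1d (hμ : muInv t μ) (hirr : Irrational t)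
    (ht : t ∈ Icc (0:ℝ) 1) {ε : ℝ} (hε : 0 < ε) :
    ∃ R : ℝ, ∀ ξ : ℝ, R ≤ |ξ| → Complex.abs (FT μ ξ) < ε := by
  obtain ⟨K₀, hK₀⟩ := EK_main hirr ht hε
  refine ⟨(10:ℝ)^(K₀+1), fun ξ hξ => ?_⟩
  have habs : Complex.abs (FT μ ξ) = Complex.abs (FT μ |ξ|) := by
    rcases abs_cases ξ with ⟨h1, _⟩ | ⟨h1, _⟩
    · rw [h1]
    · rw [h1, FT_abs_neg]
  rw [habs]
  set x := |ξ| with hxdef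
  have hx1 : (1:ℝ) ≤ x := le_trans (one_le_pow₀ (by norm_num)) hξ
  obtain ⟨K, hK1, hK2⟩ := exists_pow10 hx1
  have hKK₀ : K₀ + 1 ≤ K := by
    by_contra hcon
    push_neg at hcon
    have h2 : (10:ℝ)^(K+1) ≤ 10^(K₀+1) := pow_le_pow_right₀ (by norm_num) (by omega)
    linarith
  by_contra hcon
  push_neg at hcon
  set η := x / 10^K with hη
  have hpK : (0:ℝ) < 10^K := by positivity
  have hη1 : 1 ≤ η := (le_div_iff₀ hpK).2 (by linarith)
  have hη10 : η < 10 := by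
    rw [hη, div_lt_iff₀ hpK]
    calc x < 10^(K+1) := hK2
      _ = 10 * 10^K := by rw [pow_succ]; ring
  have hxeq : (10:ℝ)^K * η = x := by
    rw [hη]; field_simp
  have hFE := FE_pow hμ K η
  rw [hxeq] at hFE
  have habsprod : Complex.abs (∏ k ∈ Finset.range K, g t ((10:ℝ)^k * η))
      = ∏ k ∈ Finset.range K, Complex.abs (g t ((10:ℝ)^k * η)) := by
    rw [← Complex.norm_eq_abs, norm_prod]
    simp [Complex.norm_eq_abs]
  have hprod : ε ≤ ∏ k ∈ Finset.range K, Complex.abs (g t ((10:ℝ)^k * η)) := by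
    calc ε ≤ Complex.abs (FT μ x) := hcon
      _ = Complex.abs (FT μ η) * Complex.abs (∏ k ∈ Finset.range K, g t ((10:ℝ)^k * η)) := by
          rw [hFE, map_mul]
      _ ≤ 1 * ∏ k ∈ Finset.range K, Complex.abs (g t ((10:ℝ)^k * η)) := by
          rw [habsprod]
          apply mul_le_mul_of_nonneg_right (FT_le_one _)
            (Finset.prod_nonneg (fun k _ => Complex.abs.nonneg _))
      _ = _ := one_mul _
  have := hK₀ K η hη1 hη10 hprod
  omega

end Meas2

lemma ftd_pi (d : ℕ) (μ : Measure ℝ) [IsProbabilityMeasure μ] (ξ : Fin d → ℝ) :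
    ftd (Measure.pi fun _ : Fin d => μ) ξ = ∏ i, FT μ (ξ i) := by
  letI : MeasureSpace ℝ := ⟨μ⟩
  haveI : SigmaFinite (volume : Measure ℝ) := by
    show SigmaFinite μ; infer_instance
  have hvol : Measure.pi (fun _ : Fin d => μ) = (volume : Measure (Fin d → ℝ)) := by
    rw [MeasureTheory.volume_pi]
    rfl
  have hint : (fun x : Fin d → ℝ =>
      Complex.exp (((2 * π * ∑ i, ξ i * x i : ℝ) : ℂ) * Complex.I))
      = fun x => ∏ i, E (ξ i * x i) := by
    funext x
    simp only [E]
    rw [← Complex.exp_sum]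
    congr 1
    push_cast
    rw [← Finset.sum_mul, ← Finset.mul_sum]
  rw [ftd, hvol, hint]
  exact MeasureTheory.integral_fintype_prod_eq_prod (fun i y => E (ξ i * y))

end

end Stmt10

open Stmt10

/-- For every `d ≥ 1` and `φ : [0,∞) → (0,1]` tending to `0`, there is a dense `G_δ` set
`A ⊆ [0,1]` such that for all `t ∈ A` the product measure `μ_t^d` is Rajchman and
`limsup_{ξ→∞} |μ̂_t^d((ξ,0,…,0))| / φ(ξ) > 0`. -/
theorem stmt10 (d : ℕ) (hd : 1 ≤ d) (φ : ℝ → ℝ)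
    (hφ : ∀ ξ : ℝ, 0 ≤ ξ → φ ξ ∈ Set.Ioc (0 : ℝ) 1)
    (hφ0 : Tendsto φ atTop (nhds 0)) :
    ∃ A : Set ℝ, A ⊆ Set.Icc 0 1 ∧ IsGδ A ∧ Set.Icc (0 : ℝ) 1 ⊆ closure A ∧
      ∀ t ∈ A, ∀ μ : Measure ℝ, IsProbabilityMeasure μ → muInv t μ →
        Tendsto (ftd (Measure.pi fun _ : Fin d => μ)) (cocompact (Fin d → ℝ)) (nhds 0) ∧
        ∃ C > 0, ∃ᶠ ξ : ℝ in atTop,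
          C * φ ξ ≤ ‖
            (ftd (Measure.pi fun _ : Fin d => μ) (fun i => if (i : ℕ) = 0 then ξ else 0))‖ := by
  classical
  have hm : ∀ s N : ℕ, ∃ m : ℕ, s ≤ m ∧ (N:ℝ) ≤ 10^m ∧ φ ((10:ℝ)^m) ≤ (1/25) * (1/3)^s := by
    intro s N
    have hc : (0:ℝ) < (1/25) * (1/3)^s := by positivity
    have hev : ∀ᶠ x : ℝ in atTop, φ x < (1/25) * (1/3)^s := hφ0.eventually_lt_const hc
    obtain ⟨x₀, hx₀⟩ := eventually_atTop.1 hev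
    obtain ⟨m₁, hm₁⟩ := pow_unbounded_of_one_lt (max x₀ (N:ℝ)) (by norm_num : (1:ℝ) < 10)
    have hmono : (10:ℝ)^m₁ ≤ 10^(max s m₁) := pow_le_pow_right₀ (by norm_num) (le_max_right _ _)
    refine ⟨max s m₁, le_max_left _ _, ?_, ?_⟩
    · have h2 : (N:ℝ) ≤ max x₀ (N:ℝ) := le_max_right _ _
      linarith
    · apply le_of_lt
      apply hx₀
      have h1 : x₀ ≤ max x₀ (N:ℝ) := le_max_left _ _
      linarith
  choose mf hmf1 hmf2 hmf3 using hm
  set U : ℕ → Set ℝ :=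
    fun N => ⋃ (s : ℕ) (p : ℤ), Metric.ball ((p:ℝ)/10^s) (1/(100 * 10^(mf s N))) with hU
  have hUopen : ∀ N, IsOpen (U N) :=
    fun N => isOpen_iUnion (fun s => isOpen_iUnion (fun p => Metric.isOpen_ball))
  have hUdense : ∀ N, Dense (U N) := by
    intro N
    rw [Metric.dense_iff]
    intro x r hr
    obtain ⟨s₀, hs₀⟩ := pow_unbounded_of_one_lt (1/r) (by norm_num : (1:ℝ) < 10)
    have hp : (0:ℝ) < 10^s₀ := by positivity
    have hrs : 1/(10:ℝ)^s₀ < r := by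
      rw [div_lt_iff₀ hp]
      rw [div_lt_iff₀ hr] at hs₀
      nlinarith
    refine ⟨(⌊x * 10^s₀⌋ : ℝ)/10^s₀, ?_, ?_⟩
    · rw [Metric.mem_ball, Real.dist_eq]
      have h1 : (⌊x * (10:ℝ)^s₀⌋ : ℝ) ≤ x * 10^s₀ := Int.floor_le _
      have h2 : x * (10:ℝ)^s₀ < ⌊x * (10:ℝ)^s₀⌋ + 1 := Int.lt_floor_add_one _
      have hA : (⌊x * (10:ℝ)^s₀⌋ : ℝ)/10^s₀ ≤ x := by
        rw [div_le_iff₀ hp]; exact h1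
      have hB : x < ((⌊x * (10:ℝ)^s₀⌋ : ℝ) + 1)/10^s₀ := by
        rw [lt_div_iff₀ hp]; exact h2
      have hC : ((⌊x * (10:ℝ)^s₀⌋ : ℝ) + 1)/10^s₀
          = (⌊x * (10:ℝ)^s₀⌋ : ℝ)/10^s₀ + 1/10^s₀ := by ring
      rw [hC] at hB
      rw [abs_lt]
      constructor
      · linarith
      · linarith
    · have hball : (⌊x * (10:ℝ)^s₀⌋ : ℝ)/10^s₀ ∈
          Metric.ball ((⌊x * (10:ℝ)^s₀⌋:ℝ)/10^s₀) (1/(100 * 10^(mf s₀ N))) := by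
        rw [Metric.mem_ball, dist_self]
        positivity
      rw [hU]
      exact mem_iUnion.2 ⟨s₀, mem_iUnion.2 ⟨⌊x * (10:ℝ)^s₀⌋, hball⟩⟩
  set A : Set ℝ := Icc 0 1 ∩ ({x | Irrational x} ∩ ⋂ N, U N) with hA
  have hAsub : A ⊆ Icc 0 1 := inter_subset_left
  have hD : Dense ({x : ℝ | Irrational x} ∩ ⋂ N, U N) := by
    have h1 : Dense (⋂ N, U N) := dense_iInter_of_isOpen hUopen hUdense
    exact Dense.inter_of_Gδ IsGδ.setOf_irrational
      (IsGδ.iInter (fun N => (hUopen N).isGδ)) dense_irrational h1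
  refine ⟨A, hAsub, ?_, ?_, ?_⟩
  · exact IsGδ.inter isClosed_Icc.isGδ
      (IsGδ.inter IsGδ.setOf_irrational (IsGδ.iInter (fun N => (hUopen N).isGδ)))
  · intro x hx
    rw [mem_closure_iff]
    intro o ho hxo
    have hxIoo : x ∈ closure (Ioo (0:ℝ) 1) := by
      rw [closure_Ioo (by norm_num : (0:ℝ) ≠ 1)]
      exact hx
    rw [mem_closure_iff] at hxIoo
    obtain ⟨y, hyo, hyIoo⟩ := hxIoo o ho hxo
    have hopen : IsOpen (o ∩ Ioo 0 1) := ho.inter isOpen_Ioo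
    obtain ⟨z, hzD, hzo⟩ := hD.exists_mem_open hopen ⟨y, hyo, hyIoo⟩
    exact ⟨z, hzo.1, ⟨Ioo_subset_Icc_self hzo.2, hzD⟩⟩
  · intro t htA μ hprob hinv
    obtain ⟨ht01, htirr, htU⟩ := htA
    constructor
    · rw [Metric.tendsto_nhds]
      intro ε hε
      obtain ⟨R, hR⟩ := rajchman1d hinv htirr ht01 hε
      apply mem_cocompact'.2 ⟨Metric.closedBall 0 (|R| + 1),
        isCompact_closedBall _ _, ?_⟩
      intro ξ hξ
      simp only [mem_compl_iff, mem_setOf_eq, not_lt] at hξ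
      by_contra hcon
      have hnorm : ¬ (‖ξ‖ ≤ |R| + 1) := by
        intro hle
        exact hcon (by rw [Metric.mem_closedBall, dist_zero_right]; exact hle)
      rw [pi_norm_le_iff_of_nonneg (by positivity)] at hnorm
      push_neg at hnorm
      obtain ⟨i, hi⟩ := hnorm
      rw [dist_zero_right, ftd_pi d μ ξ] at hξ
      have hbound : ‖∏ j, FT μ (ξ j)‖ ≤ Complex.abs (FT μ (ξ i)) := by
        rw [norm_prod]
        rw [← Finset.mul_prod_erase Finset.univ _ (Finset.mem_univ i)]
        calc ‖FT μ (ξ i)‖ * ∏ j ∈ Finset.univ.erase i, ‖FT μ (ξ j)‖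
            ≤ ‖FT μ (ξ i)‖ * 1 := by
              apply mul_le_mul_of_nonneg_left _ (norm_nonneg _)
              apply Finset.prod_le_one (fun _ _ => norm_nonneg _)
              intro j _
              rw [Complex.norm_eq_abs]
              exact FT_le_one _
          _ = Complex.abs (FT μ (ξ i)) := by rw [mul_one, Complex.norm_eq_abs]
      have hfar : R ≤ |ξ i| := by
        have h1 : ‖ξ i‖ = |ξ i| := rfl
        rw [h1] at hi
        linarith [le_abs_self R]
      have : ‖∏ j, FT μ (ξ j)‖ < ε :=
        calc ‖∏ j, FT μ (ξ j)‖ ≤ Complex.abs (FT μ (ξ i)) := hbound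
          _ < ε := hR (ξ i) hfar
      linarith
    · refine ⟨1, one_pos, ?_⟩
      rw [Filter.frequently_atTop]
      intro b
      have ht2 := mem_iInter.1 htU ⌈b⌉₊
      rw [hU] at ht2
      simp only [mem_iUnion] at ht2
      obtain ⟨s, p, hball⟩ := ht2
      rw [Metric.mem_ball, Real.dist_eq] at hball
      refine ⟨(10:ℝ)^(mf s ⌈b⌉₊), ?_, ?_⟩
      · calc b ≤ (⌈b⌉₊:ℝ) := Nat.le_ceil b
          _ ≤ 10^(mf s ⌈b⌉₊) := hmf2 s ⌈b⌉₊
      · have hvec : ftd (Measure.pi fun _ : Fin d => μ)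
            (fun i : Fin d => if (i:ℕ) = 0 then (10:ℝ)^(mf s ⌈b⌉₊) else 0)
            = FT μ ((10:ℝ)^(mf s ⌈b⌉₊)) := by
          rw [ftd_pi]
          rw [Finset.prod_eq_single (⟨0, hd⟩ : Fin d)]
          · norm_num
          · intro j _ hj
            have hjne : (j:ℕ) ≠ 0 := by
              intro hj0
              apply hj
              exact Fin.ext hj0
            rw [if_neg hjne]
            exact FT_zero
          · intro hmem
            exact absurd (Finset.mem_univ _) hmem
        rw [hvec, one_mul]
        have hlow := FT_lower hinv ht01 s (mf s ⌈b⌉₊) p (hmf1 s ⌈b⌉₊) (le_of_lt hball)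
        calc φ ((10:ℝ)^(mf s ⌈b⌉₊)) ≤ (1/25) * (1/3)^s := hmf3 s ⌈b⌉₊
          _ ≤ Complex.abs (FT μ ((10:ℝ)^(mf s ⌈b⌉₊))) := hlow
end

section
/- Let μ be a self-similar measure on ℝ for contracting similarities {R_a}_{a ∈ A} with probability vector (p_a), all p_a > 0, and let J = [min supp(μ), max supp(μ)]. Let f : ℝ → ℝ be continuously differentiable with f'(x) ≠ 0 for all x ∈ J, and let g : f(J) → J be a two-sided inverse of f restricted to J. Then there exists k ∈ ℕ such that, writing S_w = f ∘ R_{a_1} ∘ ⋯ ∘ R_{a_k} ∘ g and p_w = p_{a_1} ⋯ p_{a_k} for each word w = (a_1, …, a_k) ∈ A^k, every S_w maps f(J) into f(J), every S_w is Lipschitz on f(J) with Lipschitz constant at most 0.9, every S_w has non-vanishing derivative on f(J), and f_* μ = Σ_{w ∈ A^k} p_w (S_w)_* (f_* μ). -/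
open MeasureTheory Filter Set
open scoped ENNReal NNReal

/-- The topological support of a measure on `ℝ`. -/
def msupport (μ : Measure ℝ) : Set ℝ := {x | ∀ ε > 0, 0 < μ (Metric.ball x ε)}

section
variable {m : ℕ} (r c : Fin m → ℝ)

lemma wordComp_sub (l : List (Fin m)) (x y : ℝ) :
    wordComp (fun a x => r a * x + c a) l x - wordComp (fun a x => r a * x + c a) l y
      = (l.map r).prod * (x - y) := by
  induction l with
  | nil => simp [wordComp]
  | cons a l ih => simp only [wordComp, Function.comp_apply, List.map_cons, List.prod_cons]
                   linear_combination (r a) * ih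

lemma wordComp_hasDerivAt (l : List (Fin m)) (x : ℝ) :
    HasDerivAt (wordComp (fun a x => r a * x + c a) l) (l.map r).prod x := by
  induction l generalizing x with
  | nil => simpa [wordComp] using hasDerivAt_id x
  | cons a l ih =>
    have h1 : HasDerivAt (fun y : ℝ => r a * y + c a) (r a)
        (wordComp (fun a x => r a * x + c a) l x) := by
      simpa using ((hasDerivAt_id _).const_mul (r a)).add_const (c a)
    simpa [wordComp, List.prod_cons, mul_comm] using h1.comp x (ih x)

lemma wordComp_continuous (l : List (Fin m)) :
    Continuous (wordComp (fun a x => r a * x + c a) l) := by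
  induction l with
  | nil => exact continuous_id
  | cons a l ih => exact (by fun_prop : Continuous (fun x : ℝ => r a * x + c a)).comp ih

lemma wordComp_mapsTo {J : Set ℝ} (hJ : ∀ a, MapsTo (fun x : ℝ => r a * x + c a) J J)
    (l : List (Fin m)) : MapsTo (wordComp (fun a x => r a * x + c a) l) J J := by
  induction l with
  | nil => exact mapsTo_id J
  | cons a l ih => exact (hJ a).comp ih

lemma measure_map_finsetSum {ι : Type*} (s : Finset ι) (ν : ι → Measure ℝ) {f : ℝ → ℝ}
    (hf : Measurable f) :
    Measure.map f (∑ i ∈ s, ν i) = ∑ i ∈ s, Measure.map f (ν i) := by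
  classical
  induction s using Finset.induction with
  | empty => simp
  | insert _ _ h ih => rw [Finset.sum_insert h, Finset.sum_insert h, Measure.map_add _ _ hf, ih]

end

lemma iterate_invariance {m : ℕ} (r c p : Fin m → ℝ) (hp : ∀ a, 0 ≤ p a)
    (μ : Measure ℝ)
    (hinv : μ = ∑ a, ENNReal.ofReal (p a) • Measure.map (fun x : ℝ => r a * x + c a) μ)
    (k : ℕ) :
    μ = ∑ w : Fin k → Fin m, ENNReal.ofReal (∏ i, p (w i)) •
      Measure.map (wordComp (fun a x => r a * x + c a) (List.ofFn w)) μ := by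
  induction k with
  | zero =>
    have : ∀ w : Fin 0 → Fin m, List.ofFn w = [] := fun w => rfl
    simp only [this]
    rw [Fintype.sum_eq_single (fun i => i.elim0) (fun w h => absurd (funext fun i => i.elim0) h)]
    simp [wordComp, Measure.map_id]
  | succ k ih =>
    nth_rewrite 1 [hinv]
    have step : ∀ a : Fin m, Measure.map (fun x : ℝ => r a * x + c a) μ
        = ∑ w : Fin k → Fin m, ENNReal.ofReal (∏ i, p (w i)) •
            Measure.map (wordComp (fun a x => r a * x + c a) (a :: List.ofFn w)) μ := by
      intro a
      nth_rewrite 1 [ih]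
      rw [measure_map_finsetSum _ _ (by fun_prop : Measurable (fun x : ℝ => r a * x + c a))]
      refine Finset.sum_congr rfl fun w _ => ?_
      rw [Measure.map_smul,
        Measure.map_map (by fun_prop) (wordComp_continuous r c _).measurable]
      rfl
    calc (∑ a, ENNReal.ofReal (p a) • Measure.map (fun x : ℝ => r a * x + c a) μ)
        = ∑ a, ∑ w : Fin k → Fin m, (ENNReal.ofReal (p a) * ENNReal.ofReal (∏ i, p (w i))) •
            Measure.map (wordComp (fun a x => r a * x + c a) (a :: List.ofFn w)) μ := by
          refine Finset.sum_congr rfl fun a _ => ?_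
          rw [step a, Finset.smul_sum]
          exact Finset.sum_congr rfl fun w _ => smul_smul _ _ _
      _ = ∑ w : Fin (k+1) → Fin m, ENNReal.ofReal (∏ i, p (w i)) •
            Measure.map (wordComp (fun a x => r a * x + c a) (List.ofFn w)) μ := by
          rw [← Finset.sum_product']
          refine Finset.sum_nbij' (fun aw => Fin.cons aw.1 aw.2) (fun w => (w 0, Fin.tail w))
            (by simp) (by simp) (fun aw _ => by simp) (fun w _ => by simp [Fin.cons_self_tail]) ?_
          rintro ⟨a, w⟩ -
          have h1 : List.ofFn (Fin.cons a w : Fin (k+1) → Fin m) = a :: List.ofFn w := by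
            simp [List.ofFn_succ]
          have h2 : (∏ i, p ((Fin.cons a w : Fin (k+1) → Fin m) i)) = p a * ∏ i, p (w i) := by
            rw [Fin.prod_univ_succ]; simp
          rw [h1, h2, ENNReal.ofReal_mul (hp a)]

lemma not_mem_msupport {μ : Measure ℝ} {x : ℝ} {ε : ℝ} (hε : 0 < ε)
    (h : μ (Metric.ball x ε) = 0) : x ∉ msupport μ := by
  intro hx
  exact absurd (hx ε hε) (by simp [h])

lemma msupport_compl_null (μ : Measure ℝ) : μ (msupport μ)ᶜ = 0 := by
  have hsub : (msupport μ)ᶜ ⊆ ⋃ q : ℚ × ℚ, ⋃ (_ : μ (Metric.ball (q.1 : ℝ) (q.2 : ℝ)) = 0),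
      Metric.ball (q.1 : ℝ) (q.2 : ℝ) := by
    intro x hx
    simp only [mem_compl_iff, msupport, mem_setOf_eq, not_forall] at hx
    obtain ⟨ε, hε, hball⟩ := hx
    rw [not_lt, le_zero_iff] at hball
    obtain ⟨q, hq1, hq2⟩ := exists_rat_btwn (show x - ε/4 < x by linarith)
    obtain ⟨δ, hδ1, hδ2⟩ := exists_rat_btwn (show (ε/4 : ℝ) < ε/2 by linarith)
    refine mem_iUnion.2 ⟨(q, δ), mem_iUnion.2 ⟨?_, ?_⟩⟩
    · refine measure_mono_null (fun y hy => ?_) hball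
      rw [Metric.mem_ball, Real.dist_eq] at hy ⊢
      have : |(q : ℝ) - x| < ε/4 := by rw [abs_sub_lt_iff]; constructor <;> linarith
      calc |y - x| = |(y - q) + ((q:ℝ) - x)| := by ring_nf
        _ ≤ |y - (q:ℝ)| + |(q:ℝ) - x| := abs_add_le _ _
        _ < δ + ε/4 := by gcongr
        _ < ε := by linarith
    · rw [Metric.mem_ball, Real.dist_eq]
      have : |x - (q:ℝ)| < ε/4 := by rw [abs_sub_lt_iff]; constructor <;> linarith
      linarith
  exact measure_mono_null hsub (measure_iUnion_null fun q => measure_iUnion_null fun h => h)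

lemma msupport_closed (μ : Measure ℝ) : IsClosed (msupport μ) := by
  rw [← isOpen_compl_iff, Metric.isOpen_iff]
  intro x hx
  simp only [mem_compl_iff, msupport, mem_setOf_eq, not_forall] at hx
  obtain ⟨ε, hε, hball⟩ := hx
  rw [not_lt, le_zero_iff] at hball
  refine ⟨ε/2, by linarith, fun y hy => ?_⟩
  rw [Metric.mem_ball] at hy
  refine not_mem_msupport (show (0:ℝ) < ε/2 by linarith) (measure_mono_null (fun z hz => ?_) hball)
  rw [Metric.mem_ball] at hz ⊢
  calc dist z x ≤ dist z y + dist y x := dist_triangle _ _ _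
    _ < ε/2 + ε/2 := by gcongr
    _ = ε := by ring

section
variable {m : ℕ} (hm : 0 < m) {r c p : Fin m → ℝ}
  (hr : ∀ a, 0 < |r a| ∧ |r a| < 1) (hp : ∀ a, 0 < p a) (hpsum : ∑ a, p a = 1)
  {μ : Measure ℝ} (hprob : IsProbabilityMeasure μ)
  (hinv : μ = ∑ a, ENNReal.ofReal (p a) • Measure.map (fun x : ℝ => r a * x + c a) μ)

include hinv hp in
lemma apply_inv (E : Set ℝ) (hE : MeasurableSet E) :
    μ E = ∑ a, ENNReal.ofReal (p a) * μ ((fun x : ℝ => r a * x + c a) ⁻¹' E) := by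
  nth_rewrite 1 [hinv]
  rw [Measure.coe_finset_sum, Finset.sum_apply]
  exact Finset.sum_congr rfl fun a _ => by
    rw [Measure.smul_apply, smul_eq_mul, Measure.map_apply (by fun_prop) hE]

include hr hp hinv in
lemma msupport_fwd (a : Fin m) {x : ℝ} (hx : x ∈ msupport μ) :
    r a * x + c a ∈ msupport μ := by
  intro ε hε
  have hra := (hr a).1
  have hsub : Metric.ball x (ε / |r a|) ⊆ (fun y : ℝ => r a * y + c a) ⁻¹' (Metric.ball (r a * x + c a) ε) := by
    intro y hy
    simp only [Metric.mem_ball, Real.dist_eq, mem_preimage] at hy ⊢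
    calc |r a * y + c a - (r a * x + c a)| = |r a| * |y - x| := by rw [← abs_mul]; ring_nf
      _ < |r a| * (ε / |r a|) := by gcongr
      _ = ε := by field_simp
  have key := apply_inv hp hinv (Metric.ball (r a * x + c a) ε) Metric.isOpen_ball.measurableSet
  have h1 : ENNReal.ofReal (p a) * μ ((fun y : ℝ => r a * y + c a) ⁻¹' (Metric.ball (r a * x + c a) ε))
      ≤ μ (Metric.ball (r a * x + c a) ε) := by
    rw [key]
    exact Finset.single_le_sum (f := fun a' => ENNReal.ofReal (p a') * μ ((fun y : ℝ => r a' * y + c a') ⁻¹' (Metric.ball (r a * x + c a) ε))) (fun a' _ => zero_le) (Finset.mem_univ a)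
  have h2 : 0 < ENNReal.ofReal (p a) * μ (Metric.ball x (ε / |r a|)) :=
    ENNReal.mul_pos (ENNReal.ofReal_pos.2 (hp a)).ne' (hx _ (div_pos hε hra)).ne'
  refine lt_of_lt_of_le (lt_of_lt_of_le h2 ?_) h1
  exact mul_le_mul_right (measure_mono hsub) _

include hm hr hp hpsum hprob hinv in
lemma msupport_bdd : ∃ ρ : ℝ, 0 < ρ ∧ msupport μ ⊆ Icc (-ρ) ρ := by
  have : Nonempty (Fin m) := ⟨⟨0, hm⟩⟩
  obtain ⟨a₀, ha₀⟩ := Finite.exists_max fun a => |r a|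
  obtain ⟨a₁, ha₁⟩ := Finite.exists_max fun a => |c a|
  set rmax := |r a₀| with hrmax
  set C := |c a₁| with hC
  have hrm0 : 0 < rmax := (hr a₀).1
  have hrm1 : rmax < 1 := (hr a₀).2
  have hC0 : 0 ≤ C := abs_nonneg _
  set ρ₁ := (C + 1) / (1 - rmax) with hρ₁
  have hρ₁pos : 0 < ρ₁ := div_pos (by linarith) (by linarith)
  set E : ℝ → Set ℝ := fun t => {x | t < |x|} with hE
  have hEmeas : ∀ t, MeasurableSet (E t) := fun t => by
    have : E t = (fun x : ℝ => |x|) ⁻¹' (Ioi t) := by ext x; simp [hE]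
    rw [this]
    exact continuous_abs.measurable measurableSet_Ioi
  -- step inequality
  have hstep : ∀ ρ : ℝ, ρ₁ ≤ ρ → μ (E ρ) ≤ μ (E (ρ + 1)) := by
    intro ρ hρ
    rw [apply_inv hp hinv (E ρ) (hEmeas ρ)]
    have hsub : ∀ a : Fin m, (fun x : ℝ => r a * x + c a) ⁻¹' (E ρ) ⊆ E (ρ + 1) := by
      intro a x hx
      simp only [hE, mem_preimage, mem_setOf_eq] at hx ⊢
      have h1 : |r a * x + c a| ≤ rmax * |x| + C := by
        calc |r a * x + c a| ≤ |r a * x| + |c a| := abs_add_le _ _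
          _ = |r a| * |x| + |c a| := by rw [abs_mul]
          _ ≤ rmax * |x| + C := by gcongr ?_ * ?_ + ?_; exacts [ha₀ a, ha₁ a]
      have h2 : ρ < rmax * |x| + C := lt_of_lt_of_le hx h1
      -- from ρ ≥ ρ₁: (ρ - C)/rmax ≥ ρ + 1
      have h3 : rmax * (ρ + 1) ≤ ρ - C := by
        rw [hρ₁, div_le_iff₀ (by linarith : (0:ℝ) < 1 - rmax)] at hρ
        nlinarith
      nlinarith
    calc ∑ a, ENNReal.ofReal (p a) * μ ((fun x : ℝ => r a * x + c a) ⁻¹' (E ρ))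
        ≤ ∑ a, ENNReal.ofReal (p a) * μ (E (ρ + 1)) := by
          exact Finset.sum_le_sum fun a _ => mul_le_mul_right (measure_mono (hsub a)) _
      _ = (∑ a, ENNReal.ofReal (p a)) * μ (E (ρ + 1)) := by rw [Finset.sum_mul]
      _ = μ (E (ρ + 1)) := by
          rw [← ENNReal.ofReal_sum_of_nonneg (fun a _ => (hp a).le), hpsum]
          simp
  have hiter : ∀ n : ℕ, μ (E ρ₁) ≤ μ (E (ρ₁ + n)) := by
    intro n
    induction n with
    | zero => simp
    | succ n ih =>
      have hge : ρ₁ ≤ ρ₁ + n := by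
        have : (0:ℝ) ≤ n := Nat.cast_nonneg n
        linarith
      refine le_trans ih (le_trans (hstep (ρ₁ + n) hge) ?_)
      have : (ρ₁ + n) + 1 = ρ₁ + ((n:ℝ) + 1) := by ring
      rw [this]
      push_cast
      exact le_rfl
  have hlim : Tendsto (fun n : ℕ => μ (E (ρ₁ + n))) atTop (nhds 0) := by
    have h0 : (⋂ n : ℕ, E (ρ₁ + n)) = ∅ := by
      ext x
      simp only [mem_iInter, mem_empty_iff_false, iff_false, not_forall, hE, mem_setOf_eq, not_lt]
      obtain ⟨n, hn⟩ := exists_nat_gt (|x| - ρ₁)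
      exact ⟨n, by push_cast; linarith⟩
    have := tendsto_measure_iInter_atTop (μ := μ)
      (s := fun n : ℕ => E (ρ₁ + n)) (fun n => (hEmeas _).nullMeasurableSet)
      (fun i j hij => by
        intro x hx
        simp only [hE, mem_setOf_eq] at hx ⊢
        have : (i:ℝ) ≤ j := Nat.cast_le.2 hij
        linarith)
      ⟨0, measure_ne_top μ _⟩
    rwa [h0, measure_empty] at this
  have hnull : μ (E ρ₁) = 0 :=
    le_antisymm (ge_of_tendsto hlim (Eventually.of_forall hiter)) zero_le
  refine ⟨ρ₁ + 1, by linarith, fun x hx => ?_⟩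
  rw [mem_Icc, ← abs_le]
  by_contra hxmem
  have habs : ρ₁ + 1 < |x| := not_le.mp hxmem
  have hball : Metric.ball x (|x| - ρ₁ - 1) ⊆ E ρ₁ := by
    intro y hy
    rw [Metric.mem_ball, Real.dist_eq] at hy
    simp only [hE, mem_setOf_eq]
    have h1 : |x| - |y| ≤ |y - x| := by
      have := abs_sub_abs_le_abs_sub x y
      rwa [abs_sub_comm x y] at this
    linarith
  exact not_mem_msupport (by linarith : (0:ℝ) < |x| - ρ₁ - 1)
    (measure_mono_null hball hnull) hx
end

/-- Pushforwards of self-similar measures by `C¹` maps with nonvanishing derivative are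
self-conformal: there is an iterate `k` of the IFS such that the conjugated maps
`S_w = f ∘ R_w ∘ g` are contractions of `f(J)` with nonvanishing derivative and
`f_*μ = Σ_w p_w (S_w)_*(f_*μ)`. -/
theorem stmt16 (m : ℕ) (hm : 0 < m) (r c p : Fin m → ℝ)
    (hr : ∀ a, 0 < |r a| ∧ |r a| < 1) (hp : ∀ a, 0 < p a) (hpsum : ∑ a, p a = 1)
    (μ : Measure ℝ) (hprob : IsProbabilityMeasure μ) (hna : ∀ x : ℝ, μ {x} = 0)
    (hinv : μ = ∑ a, ENNReal.ofReal (p a) • Measure.map (fun x : ℝ => r a * x + c a) μ)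
    (J : Set ℝ) (hJ : J = Set.Icc (sInf (msupport μ)) (sSup (msupport μ)))
    (f : ℝ → ℝ) (hf : ContDiff ℝ 1 f) (hf' : ∀ x ∈ J, deriv f x ≠ 0)
    (g : ℝ → ℝ) (hg1 : ∀ x ∈ J, g (f x) = x) (hg2 : ∀ y ∈ f '' J, f (g y) = y) :
    ∃ k : ℕ, 0 < k ∧
      (∀ w : Fin k → Fin m,
        MapsTo (f ∘ wordComp (fun a x => r a * x + c a) (List.ofFn w) ∘ g) (f '' J) (f '' J) ∧
        LipschitzOnWith (9 / 10 : ℝ≥0)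
          (f ∘ wordComp (fun a x => r a * x + c a) (List.ofFn w) ∘ g) (f '' J) ∧
        (∀ y ∈ f '' J,
          derivWithin (f ∘ wordComp (fun a x => r a * x + c a) (List.ofFn w) ∘ g)
            (f '' J) y ≠ 0)) ∧
      Measure.map f μ = ∑ w : Fin k → Fin m, ENNReal.ofReal (∏ i, p (w i)) •
        Measure.map (f ∘ wordComp (fun a x => r a * x + c a) (List.ofFn w) ∘ g)
          (Measure.map f μ) := by
  classical
  have : Nonempty (Fin m) := ⟨⟨0, hm⟩⟩
  set S := msupport μ with hS
  -- basic support facts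
  have hSnull : μ Sᶜ = 0 := msupport_compl_null μ
  have hSne : S.Nonempty := by
    by_contra h
    rw [not_nonempty_iff_eq_empty] at h
    have : μ univ = 0 := by rw [← compl_empty, ← h]; exact hSnull
    simp [measure_univ] at this
  obtain ⟨ρ, hρpos, hSsub⟩ := msupport_bdd hm hr hp hpsum hprob hinv
  have hbddA : BddAbove S := ⟨ρ, fun x hx => (hSsub hx).2⟩
  have hbddB : BddBelow S := ⟨-ρ, fun x hx => (hSsub hx).1⟩
  set i := sInf S with hi
  set s := sSup S with hs
  have hiS : i ∈ S := (msupport_closed μ).csInf_mem hSne hbddB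
  have hsS : s ∈ S := (msupport_closed μ).csSup_mem hSne hbddA
  have hSJ : S ⊆ J := by
    rw [hJ]; exact fun x hx => ⟨csInf_le hbddB hx, le_csSup hbddA hx⟩
  have hJnull : μ Jᶜ = 0 := measure_mono_null (compl_subset_compl.2 hSJ) hSnull
  have hilts : i < s := by
    rcases lt_or_eq_of_le (csInf_le_csSup hSne hbddB hbddA) with h | h
    · exact h
    · exfalso
      have hsub : S ⊆ {i} := by
        intro x hx
        have h1 := csInf_le hbddB hx
        have h2 := le_csSup hbddA hx
        rw [← h] at h2
        exact mem_singleton_iff.2 (le_antisymm h2 h1)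
      have : μ univ ≤ μ Sᶜ + μ {i} := by
        refine le_trans (measure_mono (fun x _ => ?_)) (measure_union_le _ _)
        by_cases hx : x ∈ S
        · exact Or.inr (hsub hx)
        · exact Or.inl hx
      rw [hSnull, hna i, measure_univ] at this
      simp at this
  have hiJ : i ∈ J := hSJ hiS
  have hsJ : s ∈ J := hSJ hsS
  -- R a maps J into J
  have hRJ : ∀ a, MapsTo (fun x : ℝ => r a * x + c a) J J := by
    intro a x hx
    have hRi : r a * i + c a ∈ J := hSJ (msupport_fwd hr hp hinv a hiS)
    have hRs : r a * s + c a ∈ J := hSJ (msupport_fwd hr hp hinv a hsS)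
    rw [hJ, mem_Icc] at hRi hRs hx ⊢
    show i ≤ r a * x + c a ∧ r a * x + c a ≤ s
    rcases lt_or_gt_of_ne (fun h0 : r a = 0 => by simpa [h0] using (hr a).1) with hneg | hpos
    · constructor
      · have := mul_le_mul_of_nonpos_left hx.2 hneg.le
        linarith [hRs.1]
      · have := mul_le_mul_of_nonpos_left hx.1 hneg.le
        linarith [hRi.2]
    · constructor
      · have := mul_le_mul_of_nonneg_left hx.1 hpos.le
        linarith [hRi.1]
      · have := mul_le_mul_of_nonneg_left hx.2 hpos.le
        linarith [hRs.2]
  -- extension J' of J where deriv f is nonvanishing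
  have hfc : Continuous f := hf.continuous
  have hfd : Differentiable ℝ f := hf.differentiable one_ne_zero
  have hf'c : Continuous (deriv f) := hf.continuous_deriv le_rfl
  obtain ⟨δ, hδpos, hJ'sub⟩ : ∃ δ > 0, ∀ x ∈ Icc (i - δ) (s + δ), deriv f x ≠ 0 := by
    have hUopen : IsOpen {x : ℝ | deriv f x ≠ 0} := isOpen_ne.preimage hf'c
    have hJU : J ⊆ {x : ℝ | deriv f x ≠ 0} := hf'
    have hJcpt : IsCompact J := by rw [hJ]; exact isCompact_Icc
    obtain ⟨δ, hδpos, hsub⟩ := hJcpt.exists_cthickening_subset_open hUopen hJU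
    refine ⟨δ, hδpos, fun x hx => hsub ?_⟩
    have hclamp : max i (min s x) ∈ J := by
      rw [hJ, mem_Icc]
      exact ⟨le_max_left _ _, max_le hilts.le (min_le_left _ _)⟩
    refine Metric.mem_cthickening_of_dist_le x (max i (min s x)) δ J hclamp ?_
    rw [Real.dist_eq, abs_le]
    rcases hx with ⟨hx1, hx2⟩
    constructor
    · rcases le_total x i with h | h
      · rw [max_eq_left (by rw [min_def]; split <;> linarith)]
        linarith
      · rcases le_total x s with h2 | h2
        · rw [min_eq_right h2, max_eq_right h]; linarith
        · rw [min_eq_left h2, max_eq_right hilts.le]; linarith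
    · rcases le_total x i with h | h
      · rw [max_eq_left (by rw [min_def]; split <;> linarith)]
        linarith
      · rcases le_total x s with h2 | h2
        · rw [min_eq_right h2, max_eq_right h]; linarith
        · rw [min_eq_left h2, max_eq_right hilts.le]; linarith
  set J' : Set ℝ := Icc (i - δ) (s + δ) with hJ'
  have hJJ' : J ⊆ J' := by
    rw [hJ, hJ']; exact Icc_subset_Icc (by linarith) (by linarith)
  have hJ'ne : J'.Nonempty := ⟨i, hJJ' hiJ⟩
  -- min and max of |deriv f| on J'
  obtain ⟨x₀, hx₀J, hx₀min⟩ := isCompact_Icc.exists_isMinOn hJ'ne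
    (continuous_abs.comp hf'c).continuousOn
  obtain ⟨x₁, hx₁J, hx₁max⟩ := isCompact_Icc.exists_isMaxOn hJ'ne
    (continuous_abs.comp hf'c).continuousOn
  set m₀ := |deriv f x₀| with hm₀def
  set M₀ := |deriv f x₁| with hM₀def
  have hm₀pos : 0 < m₀ := abs_pos.2 (hJ'sub x₀ hx₀J)
  have hm₀le : ∀ x ∈ J', m₀ ≤ |deriv f x| := fun x hx => hx₀min hx
  have hM₀ge : ∀ x ∈ J', |deriv f x| ≤ M₀ := fun x hx => hx₁max hx
  have hM₀pos : 0 < M₀ := lt_of_lt_of_le hm₀pos (hm₀le x₁ hx₁J)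
  -- MVT bounds
  have hkey : ∀ a ∈ J', ∀ b ∈ J', a < b →
      m₀ * (b - a) ≤ |f b - f a| ∧ |f b - f a| ≤ M₀ * (b - a) := by
    intro a ha b hb hab
    obtain ⟨ξ, hξ, hξeq⟩ := exists_hasDerivAt_eq_slope f (deriv f) hab
      (hfc.continuousOn) (fun x _ => (hfd x).hasDerivAt)
    have hξJ' : ξ ∈ J' := by
      rw [hJ', mem_Icc]
      rw [hJ', mem_Icc] at ha hb
      exact ⟨le_trans ha.1 hξ.1.le, le_trans hξ.2.le hb.2⟩
    have h1 : |f b - f a| = |deriv f ξ| * (b - a) := by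
      rw [hξeq, abs_div, abs_of_pos (by linarith : (0:ℝ) < b - a),
        div_mul_cancel₀ _ (by linarith : b - a ≠ 0)]
    rw [h1]
    constructor
    · exact mul_le_mul_of_nonneg_right (hm₀le ξ hξJ') (by linarith)
    · exact mul_le_mul_of_nonneg_right (hM₀ge ξ hξJ') (by linarith)
  have hlow : ∀ a ∈ J', ∀ b ∈ J', m₀ * |a - b| ≤ |f a - f b| := by
    intro a ha b hb
    rcases lt_trichotomy a b with h | h | h
    · rw [abs_sub_comm a b, abs_sub_comm (f a) (f b), abs_of_pos (by linarith : (0:ℝ) < b - a)]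
      exact (hkey a ha b hb h).1
    · simp [h]
    · rw [abs_of_pos (by linarith : (0:ℝ) < a - b)]
      exact (hkey b hb a ha h).1
  have hup : ∀ a ∈ J', ∀ b ∈ J', |f a - f b| ≤ M₀ * |a - b| := by
    intro a ha b hb
    rcases lt_trichotomy a b with h | h | h
    · rw [abs_sub_comm a b, abs_sub_comm (f a) (f b), abs_of_pos (by linarith : (0:ℝ) < b - a)]
      exact (hkey a ha b hb h).2
    · simp [h]
    · rw [abs_of_pos (by linarith : (0:ℝ) < a - b)]
      exact (hkey b hb a ha h).2
  have hinj : InjOn f J' := by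
    intro a ha b hb hab
    by_contra hne
    have := hlow a ha b hb
    rw [hab, sub_self, abs_zero] at this
    have h2 : 0 < |a - b| := abs_pos.2 (sub_ne_zero.2 hne)
    nlinarith
  -- sign dichotomy
  have hsign : (∀ x ∈ J', 0 < deriv f x) ∨ (∀ x ∈ J', deriv f x < 0) := by
    by_contra hcon
    push_neg at hcon
    obtain ⟨⟨x, hxJ, hxle⟩, ⟨y, hyJ, hyge⟩⟩ := hcon
    have hximg : IsPreconnected (deriv f '' J') :=
      (isPreconnected_Icc).image _ hf'c.continuousOn
    have h0 : (0:ℝ) ∈ deriv f '' J' :=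
      hximg.ordConnected.out (mem_image_of_mem _ hxJ) (mem_image_of_mem _ hyJ) ⟨hxle, hyge⟩
    obtain ⟨z, hzJ, hz0⟩ := h0
    exact hJ'sub z hzJ hz0
  have hmono : StrictMonoOn f J' ∨ StrictAntiOn f J' := by
    rcases hsign with h | h
    · exact Or.inl (strictMonoOn_of_deriv_pos (convex_Icc _ _) hfc.continuousOn
        (fun x hx => h x (interior_subset hx)))
    · exact Or.inr (strictAntiOn_of_deriv_neg (convex_Icc _ _) hfc.continuousOn
        (fun x hx => h x (interior_subset hx)))
  have hledJ' : i - δ ∈ J' := by rw [hJ', mem_Icc]; constructor <;> linarith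
  have hredJ' : s + δ ∈ J' := by rw [hJ', mem_Icc]; constructor <;> linarith
  have hxJ'mem : ∀ x ∈ J, x ∈ J' := fun x hx => hJJ' hx
  obtain ⟨u, v, huv, hFuv, hnbhd⟩ : ∃ u v : ℝ, u < v ∧ f '' J = Icc u v ∧
      ∀ y ∈ f '' J, f '' J' ∈ nhds y := by
    rcases hmono with hmono | hanti
    · refine ⟨f i, f s, hmono (hJJ' hiJ) (hJJ' hsJ) hilts, ?_, ?_⟩
      · apply Subset.antisymm
        · rintro - ⟨x, hx, rfl⟩
          have hxJ := hx
          rw [hJ, mem_Icc] at hx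
          exact ⟨hmono.monotoneOn (hJJ' hiJ) (hJJ' hxJ) hx.1,
            hmono.monotoneOn (hJJ' hxJ) (hJJ' hsJ) hx.2⟩
        · refine subset_trans (intermediate_value_Icc hilts.le (hfc.continuousOn)) ?_
          rw [hJ]
      · rintro - ⟨x, hx, rfl⟩
        have hxJ' := hJJ' hx
        rw [hJ, mem_Icc] at hx
        have h1 : f (i - δ) < f x := hmono hledJ' hxJ' (by linarith)
        have h2 : f x < f (s + δ) := hmono hxJ' hredJ' (by linarith)
        refine Filter.mem_of_superset (Ioo_mem_nhds h1 h2) ?_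
        exact subset_trans Ioo_subset_Icc_self
          (intermediate_value_Icc (by linarith) hfc.continuousOn)
    · refine ⟨f s, f i, hanti (hJJ' hiJ) (hJJ' hsJ) hilts, ?_, ?_⟩
      · apply Subset.antisymm
        · rintro - ⟨x, hx, rfl⟩
          have hxJ := hx
          rw [hJ, mem_Icc] at hx
          exact ⟨hanti.antitoneOn (hJJ' hxJ) (hJJ' hsJ) hx.2,
            hanti.antitoneOn (hJJ' hiJ) (hJJ' hxJ) hx.1⟩
        · refine subset_trans (intermediate_value_Icc' hilts.le (hfc.continuousOn)) ?_
          rw [hJ]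
      · rintro - ⟨x, hx, rfl⟩
        have hxJ' := hJJ' hx
        rw [hJ, mem_Icc] at hx
        have h1 : f (s + δ) < f x := hanti hxJ' hredJ' (by linarith)
        have h2 : f x < f (i - δ) := hanti hledJ' hxJ' (by linarith)
        refine Filter.mem_of_superset (Ioo_mem_nhds h1 h2) ?_
        exact subset_trans Ioo_subset_Icc_self
          (intermediate_value_Icc' (by linarith) hfc.continuousOn)
  set F := f '' J with hFdef
  have hFsub' : F ⊆ f '' J' := image_mono hJJ'
  set G := Function.invFunOn f J' with hGdef
  have hGmem : ∀ y ∈ f '' J', G y ∈ J' := by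
    rintro - ⟨x, hx, rfl⟩
    exact Function.invFunOn_mem ⟨x, hx, rfl⟩
  have hfG : ∀ y ∈ f '' J', f (G y) = y := by
    rintro - ⟨x, hx, rfl⟩
    exact Function.invFunOn_eq ⟨x, hx, rfl⟩
  have hGlip : ∀ y₁ ∈ f '' J', ∀ y₂ ∈ f '' J', |G y₁ - G y₂| ≤ m₀⁻¹ * |y₁ - y₂| := by
    intro y₁ h₁ y₂ h₂
    have hl := hlow (G y₁) (hGmem _ h₁) (G y₂) (hGmem _ h₂)
    rw [hfG _ h₁, hfG _ h₂] at hl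
    rw [inv_mul_eq_div, le_div_iff₀ hm₀pos]
    linarith
  have hGcont : ContinuousOn G (f '' J') := by
    refine LipschitzOnWith.continuousOn (K := Real.toNNReal m₀⁻¹)
      (LipschitzOnWith.of_dist_le_mul ?_)
    intro y₁ h₁ y₂ h₂
    rw [Real.dist_eq, Real.dist_eq, Real.coe_toNNReal _ (by positivity)]
    exact hGlip y₁ h₁ y₂ h₂
  have hgJ : ∀ y ∈ F, g y ∈ J := by
    rintro - ⟨x, hx, rfl⟩
    rw [hg1 x hx]; exact hx
  have hgG : EqOn g G F := by
    rintro - ⟨x, hx, rfl⟩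
    rw [hg1 x hx]
    exact (hinj (hGmem _ (mem_image_of_mem f (hJJ' hx))) (hJJ' hx)
      (hfG _ (mem_image_of_mem f (hJJ' hx)))).symm
  have hGderiv : ∀ y ∈ F, HasDerivAt G (deriv f (G y))⁻¹ y := by
    intro y hy
    have hy' := hFsub' hy
    refine HasDerivAt.of_local_left_inverse (hGcont.continuousAt (hnbhd y hy))
      ((hfd (G y)).hasDerivAt) (hJ'sub _ (hGmem _ hy')) ?_
    exact Filter.eventually_of_mem (hnbhd y hy) (fun z hz => hfG z hz)
  -- choose k
  obtain ⟨a₀, ha₀⟩ := Finite.exists_max fun a => |r a|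
  set rmax := |r a₀| with hrmaxdef
  have hrm0 : 0 < rmax := (hr a₀).1
  have hrm1 : rmax < 1 := (hr a₀).2
  obtain ⟨k₀, hk₀⟩ := exists_pow_lt_of_lt_one
    (show 0 < (9:ℝ)/10 * m₀ / M₀ by positivity) hrm1
  have hUD : UniqueDiffOn ℝ F := by rw [hFuv]; exact uniqueDiffOn_Icc huv
  refine ⟨k₀ + 1, Nat.succ_pos _, fun w => ?_, ?_⟩
  · set l := List.ofFn w with hldef
    set W := wordComp (fun a x => r a * x + c a) l with hWdef
    set P := (l.map r).prod with hPdef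
    have hPval : P = ∏ i, r (w i) := by
      rw [hPdef, hldef, List.map_ofFn, List.prod_ofFn]
      rfl
    have hPabs : |P| ≤ rmax ^ (k₀ + 1) := by
      rw [hPval, Finset.abs_prod]
      calc (∏ i, |r (w i)|) ≤ ∏ _i : Fin (k₀+1), rmax :=
            Finset.prod_le_prod (fun _ _ => abs_nonneg _) (fun j _ => ha₀ (w j))
        _ = rmax ^ (k₀ + 1) := by rw [Finset.prod_const, Finset.card_univ, Fintype.card_fin]
    have hP0 : P ≠ 0 := by
      rw [hPval]
      exact Finset.prod_ne_zero_iff.2 fun j _ => fun h0 => by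
        simpa [h0] using (hr (w j)).1
    have hWJ : MapsTo W J J := wordComp_mapsTo r c hRJ l
    have hWsub : ∀ x y : ℝ, W x - W y = P * (x - y) := fun x y => wordComp_sub r c l x y
    have hcontract : M₀ * (rmax ^ (k₀+1) * m₀⁻¹) ≤ 9/10 := by
      have h1 : rmax ^ (k₀+1) ≤ rmax ^ k₀ :=
        pow_le_pow_of_le_one hrm0.le hrm1.le (Nat.le_succ _)
      calc M₀ * (rmax ^ (k₀+1) * m₀⁻¹) ≤ M₀ * ((9/10 * m₀ / M₀) * m₀⁻¹) := by
            have hle : rmax ^ (k₀+1) ≤ 9/10 * m₀ / M₀ := le_of_lt (lt_of_le_of_lt h1 hk₀)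
            gcongr
        _ = 9/10 := by field_simp
    refine ⟨?_, ?_, ?_⟩
    · intro y hy
      exact mem_image_of_mem f (hWJ (hgJ y hy))
    · refine LipschitzOnWith.of_dist_le_mul ?_
      intro y₁ h₁ y₂ h₂
      have hg12 : |g y₁ - g y₂| ≤ m₀⁻¹ * |y₁ - y₂| := by
        have hl := hlow (g y₁) (hJJ' (hgJ _ h₁)) (g y₂) (hJJ' (hgJ _ h₂))
        rw [hg2 y₁ h₁, hg2 y₂ h₂] at hl
        rw [inv_mul_eq_div, le_div_iff₀ hm₀pos]
        linarith
      have hcoe : ((9/10 : ℝ≥0) : ℝ) = 9/10 := by norm_num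
      rw [Real.dist_eq, Real.dist_eq, hcoe]
      calc |(f ∘ W ∘ g) y₁ - (f ∘ W ∘ g) y₂|
          = |f (W (g y₁)) - f (W (g y₂))| := rfl
        _ ≤ M₀ * |W (g y₁) - W (g y₂)| :=
            hup _ (hJJ' (hWJ (hgJ _ h₁))) _ (hJJ' (hWJ (hgJ _ h₂)))
        _ = M₀ * (|P| * |g y₁ - g y₂|) := by rw [hWsub, abs_mul]
        _ ≤ M₀ * (rmax ^ (k₀+1) * (m₀⁻¹ * |y₁ - y₂|)) := by
            gcongr
        _ = (M₀ * (rmax ^ (k₀+1) * m₀⁻¹)) * |y₁ - y₂| := by ring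
        _ ≤ 9/10 * |y₁ - y₂| := mul_le_mul_of_nonneg_right hcontract (abs_nonneg _)
    · intro y hy
      have hyJ := hgJ y hy
      have h1 : HasDerivWithinAt g ((deriv f (G y))⁻¹) F y :=
        ((hGderiv y hy).hasDerivWithinAt).congr (fun z hz => hgG hz) (hgG hy)
      have h2 : HasDerivWithinAt (W ∘ g) (P * (deriv f (G y))⁻¹) F y :=
        ((wordComp_hasDerivAt r c l (g y)).hasDerivWithinAt).comp y h1 (mapsTo_univ _ _)
      have h3 : HasDerivWithinAt (f ∘ W ∘ g)
          (deriv f (W (g y)) * (P * (deriv f (G y))⁻¹)) F y :=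
        (((hfd (W (g y))).hasDerivAt).hasDerivWithinAt).comp y h2 (mapsTo_univ _ _)
      rw [h3.derivWithin (hUD y hy)]
      refine mul_ne_zero (hJ'sub _ (hJJ' (hWJ hyJ))) (mul_ne_zero hP0 ?_)
      exact inv_ne_zero (hJ'sub _ (hGmem _ (hFsub' hy)))
  · -- measure identity
    set Gc : ℝ → ℝ := fun z => G (max u (min v z)) with hGc
    have hclampF : ∀ z, max u (min v z) ∈ F := fun z => by
      rw [hFuv, mem_Icc]
      exact ⟨le_max_left _ _, max_le huv.le (min_le_left _ _)⟩
    have hGccont : Continuous Gc :=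
      hGcont.comp_continuous (by fun_prop) (fun z => hFsub' (hclampF z))
    have hGceq : ∀ z ∈ F, Gc z = g z := by
      intro z hz
      have hz2 := hz
      rw [hFuv, mem_Icc] at hz2
      have hcl : max u (min v z) = z := by rw [min_eq_right hz2.2, max_eq_right hz2.1]
      rw [hGc]
      simp only
      rw [hcl]
      exact (hgG hz).symm
    have hFmeas : MeasurableSet F := by rw [hFuv]; exact measurableSet_Icc
    have hmapnull : Measure.map f μ Fᶜ = 0 := by
      rw [Measure.map_apply hfc.measurable hFmeas.compl]
      refine measure_mono_null (fun x hx => ?_) hJnull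
      intro hxJ
      exact hx (mem_image_of_mem f hxJ)
    have hwmap : ∀ (l : List (Fin m)),
        Measure.map (f ∘ wordComp (fun a x => r a * x + c a) l ∘ g) (Measure.map f μ)
          = Measure.map (f ∘ wordComp (fun a x => r a * x + c a) l) μ := by
      intro l
      set W := wordComp (fun a x => r a * x + c a) l with hWdef
      have hWc : Continuous W := wordComp_continuous r c l
      have hmeas2 : Measurable (f ∘ W ∘ Gc) := (hfc.comp (hWc.comp hGccont)).measurable
      have hae1 : (f ∘ W ∘ g) =ᵐ[Measure.map f μ] (f ∘ W ∘ Gc) := by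
        rw [Filter.EventuallyEq, ae_iff]
        refine measure_mono_null (fun z hz => ?_) hmapnull
        intro hzF
        exact hz (show (f ∘ W ∘ g) z = (f ∘ W ∘ Gc) z by
          show f (W (g z)) = f (W (Gc z))
          rw [hGceq z hzF])
      rw [Measure.map_congr hae1, Measure.map_map hmeas2 hfc.measurable]
      refine Measure.map_congr ?_
      rw [Filter.EventuallyEq, ae_iff]
      refine measure_mono_null (fun x hx => ?_) hJnull
      intro hxJ
      exact hx (show ((f ∘ W ∘ Gc) ∘ f) x = (f ∘ W) x by
        show f (W (Gc (f x))) = f (W x)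
        rw [hGceq (f x) (mem_image_of_mem f hxJ), hg1 x hxJ])
    have hiter := iterate_invariance r c p (fun a => (hp a).le) μ hinv (k₀+1)
    conv_lhs => rw [hiter]
    rw [measure_map_finsetSum _ _ hfc.measurable]
    refine Finset.sum_congr rfl fun w _ => ?_
    rw [Measure.map_smul,
      Measure.map_map hfc.measurable (wordComp_continuous r c _).measurable,
      hwmap (List.ofFn w)]
end
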